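/- arXiv:1811.12057 — 8 statements merged into one kernel-verified Lean document; each statement's English description precedes it below -/
import Mathlib

section
/- Let κ ≥ 0, λ1, λ2 ∈ ℝ, and let v, m, y : [0,1] → ℝ be twice continuously differentiable with |y'(t)| < 1 for all t ∈ [0,1]. Suppose that on [0,1] the functions satisfy v' = −λ1 y, m' = −v √(1−(y')²) − λ2 y', and m − κ m'' = y''/√(1−(y')²). Then for all t ∈ [0,1], m(t) = (1 + κ v(t) y'(t) − κ λ2 √(1−y'(t)²)) · y''(t)/√(1−y'(t)²) + κ λ1 y(t) √(1−y'(t)²). -/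
open Set

/-- reduction of the equilibrium system of a rotating axially
compressed non-local rod to an explicit formula for the bending moment. -/
theorem stmt0 (κ l1 l2 : ℝ) (hκ : 0 ≤ κ)
    (v m y : ℝ → ℝ)
    (hv : ContDiff ℝ 2 v) (hm : ContDiff ℝ 2 m) (hy : ContDiff ℝ 2 y)
    (hy' : ∀ t ∈ Icc (0:ℝ) 1, |deriv y t| < 1)
    (e1 : ∀ t ∈ Icc (0:ℝ) 1, deriv v t = -l1 * y t)
    (e2 : ∀ t ∈ Icc (0:ℝ) 1,
      deriv m t = -v t * Real.sqrt (1 - (deriv y t) ^ 2) - l2 * deriv y t)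
    (e3 : ∀ t ∈ Icc (0:ℝ) 1,
      m t - κ * deriv (deriv m) t
        = deriv (deriv y) t / Real.sqrt (1 - (deriv y t) ^ 2)) :
    ∀ t ∈ Icc (0:ℝ) 1,
      m t = (1 + κ * v t * deriv y t - κ * l2 * Real.sqrt (1 - (deriv y t) ^ 2)) *
              (deriv (deriv y) t / Real.sqrt (1 - (deriv y t) ^ 2))
            + κ * l1 * y t * Real.sqrt (1 - (deriv y t) ^ 2) := by
  have hy1 : ContDiff ℝ 1 (deriv y) :=
    (contDiff_succ_iff_deriv.mp (hy.of_le (by norm_num))).2.2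
  have hydiff : Differentiable ℝ (deriv y) := hy1.differentiable (by norm_num)
  have hy2cont : Continuous (deriv (deriv y)) := hy1.continuous_deriv le_rfl
  have hvdiff : Differentiable ℝ v := hv.differentiable (by norm_num)
  -- the target function
  set F : ℝ → ℝ := fun t =>
      (1 + κ * v t * deriv y t - κ * l2 * Real.sqrt (1 - (deriv y t) ^ 2)) *
        (deriv (deriv y) t / Real.sqrt (1 - (deriv y t) ^ 2))
      + κ * l1 * y t * Real.sqrt (1 - (deriv y t) ^ 2) with hF
  have hpos : ∀ t ∈ Icc (0:ℝ) 1, 0 < 1 - (deriv y t) ^ 2 := by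
    intro t ht
    have h := abs_lt.mp (hy' t ht)
    nlinarith [h.1, h.2]
  -- equality on the open interval
  have key : ∀ t ∈ Ioo (0:ℝ) 1, m t = F t := by
    intro t ht
    have htI : t ∈ Icc (0:ℝ) 1 := Ioo_subset_Icc_self ht
    have hp := hpos t htI
    have hs : Real.sqrt (1 - (deriv y t) ^ 2) ≠ 0 := (Real.sqrt_pos.mpr hp).ne'
    -- derivative of the sqrt term
    have hu : HasDerivAt (fun u => 1 - (deriv y u) ^ 2)
        (-(2 * deriv y t * deriv (deriv y) t)) t := by
      have h1 : HasDerivAt (fun u => (deriv y u) ^ 2)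
          (2 * deriv y t ^ 1 * deriv (deriv y) t) t :=
        ((hydiff t).hasDerivAt).pow 2
      have := h1.const_sub 1
      simpa using this
    have hsder : HasDerivAt (fun u => Real.sqrt (1 - (deriv y u) ^ 2))
        (1 / (2 * Real.sqrt (1 - (deriv y t) ^ 2)) *
          (-(2 * deriv y t * deriv (deriv y) t))) t :=
      (Real.hasDerivAt_sqrt hp.ne').comp t hu
    -- derivative of the RHS of e2
    have hg : HasDerivAt (fun u => -v u * Real.sqrt (1 - (deriv y u) ^ 2) - l2 * deriv y u)
        ((-(deriv v t)) * Real.sqrt (1 - (deriv y t) ^ 2)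
          + (-v t) * (1 / (2 * Real.sqrt (1 - (deriv y t) ^ 2)) *
              (-(2 * deriv y t * deriv (deriv y) t)))
          - l2 * deriv (deriv y) t) t := by
      exact (((hvdiff t).hasDerivAt.neg.mul hsder).sub
        (((hydiff t).hasDerivAt).const_mul l2))
    -- m'' t equals deriv of g at t
    have heq : deriv (deriv m) t =
        (-(deriv v t)) * Real.sqrt (1 - (deriv y t) ^ 2)
          + (-v t) * (1 / (2 * Real.sqrt (1 - (deriv y t) ^ 2)) *
              (-(2 * deriv y t * deriv (deriv y) t)))
          - l2 * deriv (deriv y) t := by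
      have hmem : Icc (0:ℝ) 1 ∈ nhds t :=
        mem_nhds_iff.mpr ⟨Ioo 0 1, Ioo_subset_Icc_self, isOpen_Ioo, ht⟩
      have hev : deriv m =ᶠ[nhds t]
          (fun u => -v u * Real.sqrt (1 - (deriv y u) ^ 2) - l2 * deriv y u) :=
        Filter.eventuallyEq_of_mem hmem e2
      rw [hev.deriv_eq, hg.deriv]
    have h3 := e3 t htI
    have h1 := e1 t htI
    rw [h1] at heq
    have hsq : Real.sqrt (1 - (deriv y t) ^ 2) * Real.sqrt (1 - (deriv y t) ^ 2)
        = 1 - (deriv y t) ^ 2 := Real.mul_self_sqrt hp.le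
    rw [hF]
    have hm' : m t = deriv (deriv y) t / Real.sqrt (1 - (deriv y t) ^ 2)
        + κ * deriv (deriv m) t := by linarith
    rw [hm', heq]
    field_simp
    ring
  -- extend to the closed interval by continuity
  intro t ht
  have hFc : ContinuousAt F t := by
    have hs : Real.sqrt (1 - (deriv y t) ^ 2) ≠ 0 :=
      (Real.sqrt_pos.mpr (hpos t ht)).ne'
    have hsc : Continuous fun u => Real.sqrt (1 - (deriv y u) ^ 2) :=
      (continuous_const.sub ((hydiff.continuous).pow 2)).sqrt
    exact ((continuous_const.add
        ((continuous_const.mul hv.continuous).mul hydiff.continuous)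
        |>.sub (continuous_const.mul hsc)).continuousAt.mul
        ((hy2cont.continuousAt).div hsc.continuousAt hs)).add
      (((continuous_const.mul hy.continuous).continuousAt).mul hsc.continuousAt)
  have hne : (nhdsWithin t (Ioo (0:ℝ) 1)).NeBot := by
    apply mem_closure_iff_nhdsWithin_neBot.mp
    rw [closure_Ioo (by norm_num : (0:ℝ) ≠ 1)]
    exact ht
  have h1 : Filter.Tendsto m (nhdsWithin t (Ioo (0:ℝ) 1)) (nhds (m t)) :=
    ((hm.continuous.tendsto t).mono_left nhdsWithin_le_nhds)
  have h2 : Filter.Tendsto m (nhdsWithin t (Ioo (0:ℝ) 1)) (nhds (F t)) := by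
    refine Filter.Tendsto.congr' ?_ ((hFc.tendsto).mono_left nhdsWithin_le_nhds)
    filter_upwards [self_mem_nhdsWithin] with u hu
    exact (key u hu).symm
  exact tendsto_nhds_unique h1 h2
end

section
/- Let κ ≥ 0, λ1, λ2 ∈ ℝ, and let v, m, y : [0,1] → ℝ be twice continuously differentiable with |y'(t)| < 1 for all t ∈ [0,1]. Suppose that on [0,1]: v' = −λ1 y, m' = −v √(1−(y')²) − λ2 y', m − κ m'' = y''/√(1−(y')²), together with v(1) = 0 and m(1) = 0, and suppose 1 + κ λ1 y'(t) I₁y(t) − κ λ2 √(1−y'(t)²) ≠ 0 for all t. Then y satisfies M²(λ, y)(t) = 0 for all t ∈ [0,1]. -/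
open Set

/-- `I₁ z (t) = ∫_t^1 z(τ) dτ`. -/
noncomputable def I1 (z : ℝ → ℝ) (t : ℝ) : ℝ := ∫ τ in t..(1:ℝ), z τ

/-- `J₂ y (t) = ∫_t^1 ∫_τ^1 y(η) √(1 − y'(τ)²) dη dτ`. -/
noncomputable def J2 (y : ℝ → ℝ) (t : ℝ) : ℝ :=
  ∫ τ in t..(1:ℝ), ∫ η in τ..(1:ℝ), y η * Real.sqrt (1 - (deriv y τ) ^ 2)

/-- The non-linear integro-differential operator `M²(λ, y)`. -/
noncomputable def M2 (κ l1 l2 : ℝ) (y : ℝ → ℝ) (t : ℝ) : ℝ :=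
  deriv (deriv y) t - Real.sqrt (1 - (deriv y t) ^ 2) *
    ((l1 * (J2 y t - κ * y t * Real.sqrt (1 - (deriv y t) ^ 2)) + l2 * I1 (deriv y) t) /
     (1 + κ * l1 * deriv y t * I1 y t - κ * l2 * Real.sqrt (1 - (deriv y t) ^ 2)))

/-- the equilibrium system of the perfect rotating compressed
non-local rod reduces to the single integro-differential equation `M²(λ,y) = 0`. -/
theorem stmt1 (κ l1 l2 : ℝ) (hκ : 0 ≤ κ)
    (v m y : ℝ → ℝ)
    (hv : ContDiff ℝ 2 v) (hm : ContDiff ℝ 2 m) (hy : ContDiff ℝ 2 y)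
    (hy' : ∀ t ∈ Icc (0:ℝ) 1, |deriv y t| < 1)
    (e1 : ∀ t ∈ Icc (0:ℝ) 1, deriv v t = -l1 * y t)
    (e2 : ∀ t ∈ Icc (0:ℝ) 1,
      deriv m t = -v t * Real.sqrt (1 - (deriv y t) ^ 2) - l2 * deriv y t)
    (e3 : ∀ t ∈ Icc (0:ℝ) 1,
      m t - κ * deriv (deriv m) t
        = deriv (deriv y) t / Real.sqrt (1 - (deriv y t) ^ 2))
    (hv1 : v 1 = 0) (hm1 : m 1 = 0)
    (hden : ∀ t ∈ Icc (0:ℝ) 1,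
      1 + κ * l1 * deriv y t * I1 y t - κ * l2 * Real.sqrt (1 - (deriv y t) ^ 2) ≠ 0) :
    ∀ t ∈ Icc (0:ℝ) 1, M2 κ l1 l2 y t = 0 := by
  have hderiv2 : ∀ f : ℝ → ℝ, ContDiff ℝ 2 f → Differentiable ℝ (deriv f) := by
    intro f hf
    have h : ContDiff ℝ (1+1 : WithTop ℕ∞) f := by exact_mod_cast hf
    exact (contDiff_succ_iff_deriv.mp h).2.2.differentiable (by norm_num)
  have hyd : Differentiable ℝ y := hy.differentiable (by norm_num)
  have hvd : Differentiable ℝ v := hv.differentiable (by norm_num)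
  have hmd : Differentiable ℝ m := hm.differentiable (by norm_num)
  have hyd2 := hderiv2 y hy
  have hvd2 := hderiv2 v hv
  have hmd2 := hderiv2 m hm
  have hcy : Continuous y := hyd.continuous
  have hcy' : Continuous (deriv y) := hyd2.continuous
  have hcs : Continuous (fun τ => Real.sqrt (1 - (deriv y τ)^2)) :=
    Real.continuous_sqrt.comp (by continuity)
  have hcI1 : Continuous (I1 y) := by
    have h : Continuous (fun t => ∫ τ in (1:ℝ)..t, y τ) :=
      intervalIntegral.continuous_primitive (fun a b => hcy.intervalIntegrable a b) 1
    have heq : I1 y = fun t => -∫ τ in (1:ℝ)..t, y τ := by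
      funext t; rw [I1, intervalIntegral.integral_symm]
    rw [heq]; exact h.neg
  have hpos : ∀ t ∈ Icc (0:ℝ) 1, 0 < 1 - (deriv y t)^2 := by
    intro t ht
    have h := (sq_lt_one_iff_abs_lt_one _).mpr (hy' t ht)
    linarith
  have hsub : ∀ a ∈ Icc (0:ℝ) 1, uIcc a (1:ℝ) ⊆ Icc 0 1 := by
    intro a ha
    rw [uIcc_of_le ha.2]; exact Icc_subset_Icc ha.1 le_rfl
  -- v = l1 * I1 y on Icc
  have hveq : ∀ t ∈ Icc (0:ℝ) 1, v t = l1 * I1 y t := by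
    intro a ha
    have h1 : (∫ τ in a..1, deriv v τ) = v 1 - v a :=
      intervalIntegral.integral_deriv_eq_sub (fun x _ => hvd.differentiableAt)
        (hvd2.continuous.intervalIntegrable a 1)
    have h2 : (∫ τ in a..1, deriv v τ) = ∫ τ in a..1, -l1 * y τ :=
      intervalIntegral.integral_congr (fun x hx => e1 x (hsub a ha hx))
    rw [h2, intervalIntegral.integral_const_mul, hv1] at h1
    unfold I1
    linear_combination h1
  -- J2 as a single integral
  have hJ2 : ∀ a : ℝ, J2 y a
      = ∫ τ in a..1, I1 y τ * Real.sqrt (1 - (deriv y τ)^2) := by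
    intro a
    unfold J2
    apply intervalIntegral.integral_congr
    intro τ _
    show (∫ η in τ..1, y η * Real.sqrt (1 - (deriv y τ)^2))
      = I1 y τ * Real.sqrt (1 - (deriv y τ)^2)
    rw [intervalIntegral.integral_mul_const]
    rfl
  -- m = l1 * J2 y + l2 * I1 y' on Icc
  have hmeq : ∀ t ∈ Icc (0:ℝ) 1, m t = l1 * J2 y t + l2 * I1 (deriv y) t := by
    intro a ha
    have h1 : (∫ τ in a..1, deriv m τ) = m 1 - m a :=
      intervalIntegral.integral_deriv_eq_sub (fun x _ => hmd.differentiableAt)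
        (hmd2.continuous.intervalIntegrable a 1)
    have h2 : (∫ τ in a..1, deriv m τ)
        = ∫ τ in a..1, (-(l1 * (I1 y τ * Real.sqrt (1 - (deriv y τ)^2))) - l2 * deriv y τ) := by
      apply intervalIntegral.integral_congr
      intro x hx
      rw [e2 x (hsub a ha hx), hveq x (hsub a ha hx)]
      ring
    have hint1 : IntervalIntegrable
        (fun τ => l1 * (I1 y τ * Real.sqrt (1 - (deriv y τ)^2))) MeasureTheory.volume a 1 :=
      (continuous_const.mul (hcI1.mul hcs)).intervalIntegrable a 1
    have hint2 : IntervalIntegrable (fun τ => l2 * deriv y τ) MeasureTheory.volume a 1 :=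
      (continuous_const.mul hcy').intervalIntegrable a 1
    have h3 : (∫ τ in a..1, (-(l1 * (I1 y τ * Real.sqrt (1 - (deriv y τ)^2))) - l2 * deriv y τ))
        = -(l1 * (∫ τ in a..1, I1 y τ * Real.sqrt (1 - (deriv y τ)^2)))
          - l2 * ∫ τ in a..1, deriv y τ := by
      have hint1' : IntervalIntegrable
          (fun τ => -(l1 * (I1 y τ * Real.sqrt (1 - (deriv y τ)^2)))) MeasureTheory.volume a 1 :=
        (continuous_const.mul (hcI1.mul hcs)).neg.intervalIntegrable a 1
      rw [intervalIntegral.integral_sub hint1' hint2, intervalIntegral.integral_neg,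
        intervalIntegral.integral_const_mul, intervalIntegral.integral_const_mul]
    rw [h2, h3, hm1] at h1
    rw [hJ2 a]
    unfold I1
    unfold I1 at h1
    linear_combination h1
  -- second derivative of m on Icc
  have hm'' : ∀ t ∈ Icc (0:ℝ) 1, deriv (deriv m) t
      = l1 * y t * Real.sqrt (1 - (deriv y t)^2)
        + v t * (deriv y t * deriv (deriv y) t / Real.sqrt (1 - (deriv y t)^2))
        - l2 * deriv (deriv y) t := by
    intro t ht
    have hp := hpos t ht
    have hsne : Real.sqrt (1 - (deriv y t)^2) ≠ 0 := by
      positivity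
    have hu : HasDerivAt (fun τ => 1 - deriv y τ ^ 2)
        (-(2 * deriv y t * deriv (deriv y) t)) t := by
      have h := ((hyd2 t).hasDerivAt).fun_pow 2
      have h2 := (hasDerivAt_const t (1:ℝ)).sub h
      refine h2.congr_deriv ?_
      push_cast
      ring
    have hs : HasDerivAt (fun τ => Real.sqrt (1 - deriv y τ ^ 2))
        (-(deriv y t * deriv (deriv y) t) / Real.sqrt (1 - deriv y t ^ 2)) t := by
      have h0 := (Real.hasDerivAt_sqrt (ne_of_gt hp)).comp t hu
      refine h0.congr_deriv ?_
      field_simp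
    have hg := (((hvd t).hasDerivAt.neg.mul hs).sub
      (((hyd2 t).hasDerivAt).const_mul l2))
    have h1 : HasDerivWithinAt (deriv m) (deriv (deriv m) t) (Icc 0 1) t :=
      ((hmd2 t).hasDerivAt).hasDerivWithinAt
    have h2 : HasDerivWithinAt (deriv m)
        (-deriv v t * Real.sqrt (1 - deriv y t ^ 2)
          + -v t * (-(deriv y t * deriv (deriv y) t) / Real.sqrt (1 - deriv y t ^ 2))
          - l2 * deriv (deriv y) t)
        (Icc 0 1) t :=
      hg.hasDerivWithinAt.congr (fun x hx => e2 x hx) (e2 t ht)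
    have heq := UniqueDiffWithinAt.eq_deriv _ (uniqueDiffOn_Icc one_pos t ht) h1 h2
    rw [heq, e1 t ht]
    field_simp
  -- final computation
  intro t ht
  have hp := hpos t ht
  have hsne : Real.sqrt (1 - (deriv y t)^2) ≠ 0 := by positivity
  have hD := hden t ht
  have E := e3 t ht
  rw [hmeq t ht, hm'' t ht, hveq t ht] at E
  unfold M2
  rw [mul_div_assoc', sub_eq_zero, eq_div_iff hD]
  field_simp at E
  linear_combination -E
end

section
/- Let κ ≥ 0 and λ = (λ1, λ2) ∈ ℝ² with 1 − κ λ2 ≠ 0, let y : [0,1] → ℝ be twice continuously differentiable, and fix t ∈ [0,1]. Then the real-valued function s ↦ M²(λ, s·y)(t), defined for s in a neighbourhood of 0 (where |s y'| < 1 and the denominator is nonzero), is differentiable at s = 0 and its derivative there equals L²(λ)y(t) = y''(t) − (λ1/(1−κλ2))(I₂y(t) − κ y(t)) − (λ2/(1−κλ2)) I₁y'(t). In other words, the linearization of the operator M² at the trivial solution y = 0 is the linear operator L²(λ). -/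
open Set

/-- `I₂ z (t) = ∫_t^1 ∫_τ^1 z(η) dη dτ`. -/
noncomputable def I2 (z : ℝ → ℝ) (t : ℝ) : ℝ :=
  ∫ τ in t..(1:ℝ), ∫ η in τ..(1:ℝ), z η

/-- The linearized operator `L²(λ)`. -/
noncomputable def L2 (κ l1 l2 : ℝ) (y : ℝ → ℝ) (t : ℝ) : ℝ :=
  deriv (deriv y) t - l1 / (1 - κ * l2) * (I2 y t - κ * y t)
    - l2 / (1 - κ * l2) * I1 (deriv y) t

/-- Auxiliary: `F(s) = ∫_t^1 √(1 - (s y'(τ))²) · I₁y(τ) dτ`, so that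
`J₂(s·y)(t) = s · F(s)`. -/
noncomputable def Faux (y : ℝ → ℝ) (t s : ℝ) : ℝ :=
  ∫ τ in t..(1:ℝ), Real.sqrt (1 - (s * deriv y τ) ^ 2) * I1 y τ

lemma sqrt_one_sub_sq_abs_le (u : ℝ) : |Real.sqrt (1 - u ^ 2) - 1| ≤ u ^ 2 := by
  rcases le_or_gt (u ^ 2) 1 with h | h
  · have h0 : (0:ℝ) ≤ 1 - u ^ 2 := by linarith
    have h1 : Real.sqrt (1 - u ^ 2) ≤ 1 := Real.sqrt_le_one.mpr (by nlinarith [sq_nonneg u])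
    have h2 : 1 - u ^ 2 ≤ Real.sqrt (1 - u ^ 2) := by
      nlinarith [Real.sq_sqrt h0, Real.sqrt_nonneg (1 - u ^ 2)]
    rw [abs_sub_le_iff]
    constructor <;> linarith
  · have : Real.sqrt (1 - u ^ 2) = 0 :=
      Real.sqrt_eq_zero_of_nonpos (by linarith)
    rw [this]
    rw [abs_sub_le_iff]
    constructor <;> nlinarith

lemma continuous_I1 {y : ℝ → ℝ} (hy : Continuous y) : Continuous (I1 y) := by
  have : Continuous fun τ => ∫ x in (1:ℝ)..τ, y x :=
    intervalIntegral.continuous_primitive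
      (fun a b => hy.intervalIntegrable a b) 1
  have h2 : I1 y = fun τ => -∫ x in (1:ℝ)..τ, y x := by
    funext τ
    rw [I1, intervalIntegral.integral_symm]
  rw [h2]
  exact this.neg

lemma contDiff_one_deriv {y : ℝ → ℝ} (hy : ContDiff ℝ 2 y) :
    ContDiff ℝ 1 (deriv y) := by
  have : ContDiff ℝ (1 + 1) y := by norm_num [hy]
  exact (contDiff_succ_iff_deriv.mp this).2.2

lemma J2_smul {y : ℝ → ℝ} (s t : ℝ) :
    J2 (fun x => s * y x) t = s * Faux y t s := by
  rw [J2, Faux, ← intervalIntegral.integral_const_mul]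
  apply intervalIntegral.integral_congr
  intro τ _
  have hd : deriv (fun x => s * y x) τ = s * deriv y τ := deriv_const_mul_field s
  dsimp only
  rw [hd]
  have : (fun η => (fun x => s * y x) η * Real.sqrt (1 - (s * deriv y τ) ^ 2))
      = fun η => (s * Real.sqrt (1 - (s * deriv y τ) ^ 2)) * y η := by
    funext η; ring
  rw [this, intervalIntegral.integral_const_mul, I1]
  ring

lemma hasDerivAt_sF {y : ℝ → ℝ} (hy : ContDiff ℝ 2 y) {t : ℝ} (ht : t ≤ 1) :
    HasDerivAt (fun s => s * Faux y t s) (I2 y t) 0 := by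
  have hcy : Continuous y := hy.continuous
  have hcy' : Continuous (deriv y) := (contDiff_one_deriv hy).continuous
  have hI1 : Continuous (I1 y) := continuous_I1 hcy
  have hF0 : Faux y t 0 = I2 y t := by
    rw [Faux, I2]
    apply intervalIntegral.integral_congr
    intro τ _
    simp [I1]
  set C : ℝ := ∫ τ in t..(1:ℝ), (deriv y τ) ^ 2 * |I1 y τ| with hC
  have hint : ∀ s : ℝ, IntervalIntegrable
      (fun τ => Real.sqrt (1 - (s * deriv y τ) ^ 2) * I1 y τ) MeasureTheory.volume t 1 := by
    intro s
    exact ((Real.continuous_sqrt.comp (by continuity)).mul hI1).intervalIntegrable t 1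
  have hbound : ∀ s : ℝ, |Faux y t s - Faux y t 0| ≤ s ^ 2 * C := by
    intro s
    have hsub : Faux y t s - Faux y t 0 =
        ∫ τ in t..(1:ℝ), (Real.sqrt (1 - (s * deriv y τ) ^ 2)
          - Real.sqrt (1 - (0 * deriv y τ) ^ 2)) * I1 y τ := by
      rw [Faux, Faux, ← intervalIntegral.integral_sub (hint s) (hint 0)]
      apply intervalIntegral.integral_congr
      intro τ _; ring
    rw [hsub]
    calc |∫ τ in t..(1:ℝ), (Real.sqrt (1 - (s * deriv y τ) ^ 2)
          - Real.sqrt (1 - (0 * deriv y τ) ^ 2)) * I1 y τ|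
        ≤ ∫ τ in t..(1:ℝ), |(Real.sqrt (1 - (s * deriv y τ) ^ 2)
          - Real.sqrt (1 - (0 * deriv y τ) ^ 2)) * I1 y τ| :=
          intervalIntegral.abs_integral_le_integral_abs ht
      _ ≤ ∫ τ in t..(1:ℝ), s ^ 2 * ((deriv y τ) ^ 2 * |I1 y τ|) := by
          apply intervalIntegral.integral_mono_on ht
          · exact (((Real.continuous_sqrt.comp (by continuity)).sub
              (Real.continuous_sqrt.comp (by continuity))).mul hI1).abs.intervalIntegrable t 1
          · exact (continuous_const.mul ((hcy'.pow 2).mul hI1.abs)).intervalIntegrable t 1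
          · intro τ _
            rw [abs_mul]
            have h1 : |Real.sqrt (1 - (s * deriv y τ) ^ 2)
                - Real.sqrt (1 - (0 * deriv y τ) ^ 2)| ≤ (s * deriv y τ) ^ 2 := by
              simpa using sqrt_one_sub_sq_abs_le (s * deriv y τ)
            calc |Real.sqrt (1 - (s * deriv y τ) ^ 2)
                  - Real.sqrt (1 - (0 * deriv y τ) ^ 2)| * |I1 y τ|
                ≤ (s * deriv y τ) ^ 2 * |I1 y τ| :=
                  mul_le_mul_of_nonneg_right h1 (abs_nonneg _)
              _ = s ^ 2 * ((deriv y τ) ^ 2 * |I1 y τ|) := by ring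
      _ = s ^ 2 * C := by rw [hC, intervalIntegral.integral_const_mul]
  have htend : Filter.Tendsto (fun s => Faux y t s - I2 y t) (nhds 0) (nhds 0) := by
    apply squeeze_zero_norm (f := fun s => Faux y t s - I2 y t) (a := fun s => s ^ 2 * C)
    · intro s
      rw [Real.norm_eq_abs, ← hF0]
      exact hbound s
    · have : Filter.Tendsto (fun s : ℝ => s ^ 2 * C) (nhds 0) (nhds (0 ^ 2 * C)) :=
        ((continuous_pow 2).mul continuous_const).tendsto 0
      simpa using this
  have hlo : (fun s : ℝ => s * (Faux y t s - I2 y t)) =o[nhds 0] (fun s : ℝ => s) := by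
    have h2 : (fun s : ℝ => Faux y t s - I2 y t) =o[nhds 0] (fun _ : ℝ => (1:ℝ)) :=
      (Asymptotics.isLittleO_one_iff ℝ).mpr htend
    have h3 := (Asymptotics.isBigO_refl (fun s : ℝ => s) (nhds 0)).mul_isLittleO h2
    simpa using h3
  rw [hasDerivAt_iff_isLittleO]
  apply hlo.congr' _ _
  · filter_upwards with s
    ring_nf
  · filter_upwards with s
    simp

/-- the linearization of `M²` at the trivial solution `y = 0`
is the linear operator `L²(λ)`: the function `s ↦ M²(λ, s·y)(t)` has derivative
`L²(λ)y(t)` at `s = 0`. -/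
theorem stmt4 (κ l1 l2 : ℝ) (hκ : 0 ≤ κ) (hden : 1 - κ * l2 ≠ 0)
    (y : ℝ → ℝ) (hy : ContDiff ℝ 2 y) (t : ℝ) (ht : t ∈ Icc (0:ℝ) 1) :
    HasDerivAt (fun s : ℝ => M2 κ l1 l2 (fun x => s * y x) t) (L2 κ l1 l2 y t) 0 := by
  have hcy' : Continuous (deriv y) := (contDiff_one_deriv hy).continuous
  set a := deriv y t with ha
  set B := deriv (deriv y) t with hB
  set c := y t with hc
  set D0 := I1 (deriv y) t with hD0
  set E := I1 y t with hE
  -- rewrite the function in explicit form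
  have hfun : (fun s : ℝ => M2 κ l1 l2 (fun x => s * y x) t)
      = fun s : ℝ => s * B - Real.sqrt (1 - (s * a) ^ 2) *
        ((l1 * (s * Faux y t s - κ * (s * c) * Real.sqrt (1 - (s * a) ^ 2))
          + l2 * (s * D0)) /
         (1 + κ * l1 * (s * a) * (s * E) - κ * l2 * Real.sqrt (1 - (s * a) ^ 2))) := by
    funext s
    rw [M2]
    have hd1 : deriv (fun x => s * y x) = fun x => s * deriv y x :=
      deriv_const_mul_field' s
    have hd2 : deriv (deriv (fun x => s * y x)) t = s * B := by
      rw [hd1, hB]; exact deriv_const_mul_field s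
    have hdt : deriv (fun x => s * y x) t = s * a := by rw [hd1]
    have hI1d : I1 (deriv (fun x => s * y x)) t = s * D0 := by
      rw [hd1, hD0, I1, I1, intervalIntegral.integral_const_mul]
    have hI1y : I1 (fun x => s * y x) t = s * E := by
      rw [hE, I1, I1, intervalIntegral.integral_const_mul]
    rw [hd2, hdt, hI1d, hI1y, J2_smul]
  rw [hfun]
  -- basic derivative facts at 0
  have hsa : HasDerivAt (fun s : ℝ => s * a) a 0 := by
    simpa using (hasDerivAt_id (0:ℝ)).mul_const a
  have hinner : HasDerivAt (fun s : ℝ => 1 - (s * a) ^ 2)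
      (0 - 2 * (0 * a) ^ 1 * a) 0 :=
    (hasDerivAt_const 0 (1:ℝ)).sub (hsa.pow 2)
  have hne : (1:ℝ) - (0 * a) ^ 2 ≠ 0 := by norm_num
  have hq : HasDerivAt (fun s : ℝ => Real.sqrt (1 - (s * a) ^ 2))
      ((0 - 2 * (0 * a) ^ 1 * a) / (2 * Real.sqrt (1 - (0 * a) ^ 2))) 0 :=
    hinner.sqrt hne
  have hsF : HasDerivAt (fun s : ℝ => s * Faux y t s) (I2 y t) 0 :=
    hasDerivAt_sF hy ht.2
  have hsc : HasDerivAt (fun s : ℝ => κ * (s * c)) (κ * c) 0 := by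
    simpa using ((hasDerivAt_id (0:ℝ)).mul_const c).const_mul κ
  have hscq : HasDerivAt (fun s : ℝ => κ * (s * c) * Real.sqrt (1 - (s * a) ^ 2))
      (κ * c * Real.sqrt (1 - (0 * a) ^ 2)
        + κ * (0 * c) * ((0 - 2 * (0 * a) ^ 1 * a) / (2 * Real.sqrt (1 - (0 * a) ^ 2)))) 0 :=
    hsc.mul hq
  have hsD0 : HasDerivAt (fun s : ℝ => l2 * (s * D0)) (l2 * D0) 0 := by
    simpa using ((hasDerivAt_id (0:ℝ)).mul_const D0).const_mul l2
  have hN : HasDerivAt (fun s : ℝ =>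
      l1 * (s * Faux y t s - κ * (s * c) * Real.sqrt (1 - (s * a) ^ 2)) + l2 * (s * D0))
      (l1 * (I2 y t - (κ * c * Real.sqrt (1 - (0 * a) ^ 2)
        + κ * (0 * c) * ((0 - 2 * (0 * a) ^ 1 * a) / (2 * Real.sqrt (1 - (0 * a) ^ 2)))))
        + l2 * D0) 0 :=
    ((hsF.sub hscq).const_mul l1).add hsD0
  have hkla : HasDerivAt (fun s : ℝ => κ * l1 * (s * a)) (κ * l1 * a) 0 := by
    simpa using ((hasDerivAt_id (0:ℝ)).mul_const a).const_mul (κ * l1)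
  have hsE : HasDerivAt (fun s : ℝ => s * E) E 0 := by
    simpa using (hasDerivAt_id (0:ℝ)).mul_const E
  have hD : HasDerivAt (fun s : ℝ =>
      1 + κ * l1 * (s * a) * (s * E) - κ * l2 * Real.sqrt (1 - (s * a) ^ 2))
      ((0 + (κ * l1 * a * (0 * E) + κ * l1 * (0 * a) * E))
        - κ * l2 * ((0 - 2 * (0 * a) ^ 1 * a) / (2 * Real.sqrt (1 - (0 * a) ^ 2)))) 0 :=
    ((hasDerivAt_const 0 (1:ℝ)).add (hkla.mul hsE)).sub (hq.const_mul (κ * l2))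
  have hDne : (1 + κ * l1 * (0 * a) * (0 * E)
      - κ * l2 * Real.sqrt (1 - (0 * a) ^ 2)) ≠ 0 := by
    simpa [Real.sqrt_one] using hden
  have hfrac := hN.div hD hDne
  have hfull := hq.mul hfrac
  have hB' : HasDerivAt (fun s : ℝ => s * B) B 0 := by
    simpa using (hasDerivAt_id (0:ℝ)).mul_const B
  have htotal := hB'.sub hfull
  convert htotal using 1
  · rfl
  · rfl
  · rfl
  rw [L2]
  simp only [zero_mul, mul_zero, Real.sqrt_one]
  norm_num [Real.sqrt_one]
  field_simp
  ring
end

section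
/- Let κ ≥ 0 and λ = (λ1, λ2) ∈ ℝ² with 1 − κ λ2 ≠ 0, and let y : [0,1] → ℝ be four times continuously differentiable satisfying the two end conditions y''(1)(1−κλ2) + κλ1 y(1) = 0 and y'''(1)(1−κλ2) + (κλ1+λ2) y'(1) = 0. Then for every t ∈ [0,1], I₂(L⁴(λ)y)(t) = L²(λ)y(t), where L²(λ)y(t) = y''(t) − (λ1/(1−κλ2))(I₂y(t) − κ y(t)) − (λ2/(1−κλ2)) I₁y'(t) and L⁴(λ)y(t) = y⁗(t) + ((κλ1+λ2)/(1−κλ2)) y''(t) − (λ1/(1−κλ2)) y(t). -/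
open Set

/-- The linearized fourth-order differential operator `L⁴(λ)`. -/
noncomputable def L4 (κ l1 l2 : ℝ) (y : ℝ → ℝ) (t : ℝ) : ℝ :=
  deriv (deriv (deriv (deriv y))) t
    + (κ * l1 + l2) / (1 - κ * l2) * deriv (deriv y) t
    - l1 / (1 - κ * l2) * y t

lemma I1_continuous (z : ℝ → ℝ) (hz : Continuous z) : Continuous (I1 z) := by
  have h : I1 z = fun τ => (∫ x in (0:ℝ)..1, z x) - ∫ x in (0:ℝ)..τ, z x := by
    funext τ
    rw [eq_sub_iff_add_eq']
    exact intervalIntegral.integral_add_adjacent_intervals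
      (hz.intervalIntegrable _ _) (hz.intervalIntegrable _ _)
  rw [h]
  exact continuous_const.sub
    (intervalIntegral.continuous_primitive (fun a b => hz.intervalIntegrable a b) 0)

/-- under the end conditions at `t = 1`, `I₂(L⁴(λ)y) = L²(λ)y` on `[0,1]`. -/
theorem stmt6 (κ l1 l2 : ℝ) (hκ : 0 ≤ κ) (hden : 1 - κ * l2 ≠ 0)
    (y : ℝ → ℝ) (hy : ContDiff ℝ 4 y)
    (bc3 : deriv (deriv y) 1 * (1 - κ * l2) + κ * l1 * y 1 = 0)
    (bc4 : deriv (deriv (deriv y)) 1 * (1 - κ * l2) + (κ * l1 + l2) * deriv y 1 = 0) :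
    ∀ t ∈ Icc (0:ℝ) 1, I2 (L4 κ l1 l2 y) t = L2 κ l1 l2 y t := by
  intro t _
  set a := (κ * l1 + l2) / (1 - κ * l2) with ha
  set b := l1 / (1 - κ * l2) with hb
  have h3 : ContDiff ℝ 3 (deriv y) :=
    (contDiff_succ_iff_deriv.mp (show ContDiff ℝ (3 + 1) y by exact_mod_cast hy)).2.2
  have h2 : ContDiff ℝ 2 (deriv (deriv y)) :=
    (contDiff_succ_iff_deriv.mp (show ContDiff ℝ (2 + 1) (deriv y) by exact_mod_cast h3)).2.2
  have h1 : ContDiff ℝ 1 (deriv (deriv (deriv y))) :=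
    (contDiff_succ_iff_deriv.mp
      (show ContDiff ℝ (1 + 1) (deriv (deriv y)) by exact_mod_cast h2)).2.2
  have hd0 : Differentiable ℝ y := hy.differentiable (by norm_num)
  have hd1 : Differentiable ℝ (deriv y) := h3.differentiable (by norm_num)
  have hd2 : Differentiable ℝ (deriv (deriv y)) := h2.differentiable (by norm_num)
  have hd3 : Differentiable ℝ (deriv (deriv (deriv y))) := h1.differentiable (by norm_num)
  have hc0 : Continuous y := hd0.continuous
  have hc1 : Continuous (deriv y) := hd1.continuous
  have hc2 : Continuous (deriv (deriv y)) := hd2.continuous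
  have hc3 : Continuous (deriv (deriv (deriv y))) := hd3.continuous
  have hc4 : Continuous (deriv (deriv (deriv (deriv y)))) := h1.continuous_deriv le_rfl
  have ftc : ∀ (f : ℝ → ℝ), Differentiable ℝ f → Continuous (deriv f) →
      ∀ s u : ℝ, (∫ x in s..u, deriv f x) = f u - f s := fun f hf hcf s u =>
    intervalIntegral.integral_deriv_eq_sub (fun x _ => hf x) ((hcf.intervalIntegrable s u))
  -- inner integral
  have inner : ∀ τ : ℝ, (∫ η in τ..(1:ℝ), L4 κ l1 l2 y η)
      = (deriv (deriv (deriv y)) 1 - deriv (deriv (deriv y)) τ)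
        + a * (deriv y 1 - deriv y τ) - b * I1 y τ := by
    intro τ
    have e1 : (∫ η in τ..(1:ℝ), deriv (deriv (deriv (deriv y))) η)
        = deriv (deriv (deriv y)) 1 - deriv (deriv (deriv y)) τ := ftc _ hd3 hc4 τ 1
    have e2 : (∫ η in τ..(1:ℝ), deriv (deriv y) η) = deriv y 1 - deriv y τ :=
      ftc _ hd1 hc2 τ 1
    simp only [L4]
    rw [intervalIntegral.integral_sub
        ((hc4.fun_add (continuous_const.fun_mul hc2)).intervalIntegrable _ _)
        ((continuous_const.fun_mul hc0).intervalIntegrable _ _),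
      intervalIntegral.integral_add (hc4.intervalIntegrable _ _)
        ((continuous_const.fun_mul hc2).intervalIntegrable _ _),
      intervalIntegral.integral_const_mul, intervalIntegral.integral_const_mul,
      e1, e2]
    rfl
  have hI1y : Continuous (I1 y) := I1_continuous y hc0
  -- outer integral
  have outer : I2 (L4 κ l1 l2 y) t
      = (deriv (deriv (deriv y)) 1 * (1 - t) - (deriv (deriv y) 1 - deriv (deriv y) t))
        + a * (deriv y 1 * (1 - t) - (y 1 - y t)) - b * I2 y t := by
    have e3 : (∫ τ in t..(1:ℝ), deriv (deriv (deriv y)) τ)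
        = deriv (deriv y) 1 - deriv (deriv y) t := ftc _ hd2 hc3 t 1
    have e4 : (∫ τ in t..(1:ℝ), deriv y τ) = y 1 - y t := ftc _ hd0 hc1 t 1
    have c1 : Continuous (fun τ => deriv (deriv (deriv y)) 1 - deriv (deriv (deriv y)) τ) :=
      continuous_const.sub hc3
    have c2 : Continuous (fun τ => a * (deriv y 1 - deriv y τ)) :=
      continuous_const.mul (continuous_const.sub hc1)
    simp only [I2, inner]
    rw [intervalIntegral.integral_sub ((c1.fun_add c2).intervalIntegrable _ _)
        ((continuous_const.fun_mul hI1y).intervalIntegrable _ _),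
      intervalIntegral.integral_add (c1.intervalIntegrable _ _) (c2.intervalIntegrable _ _),
      intervalIntegral.integral_const_mul,
      intervalIntegral.integral_sub ((continuous_const (y := deriv (deriv (deriv y)) 1)).intervalIntegrable _ _)
        (hc3.intervalIntegrable _ _),
      intervalIntegral.integral_sub (continuous_const.intervalIntegrable _ _)
        (hc1.intervalIntegrable _ _),
      e3, e4, intervalIntegral.integral_const, intervalIntegral.integral_const,
      intervalIntegral.integral_const_mul,
      show (∫ τ in t..(1:ℝ), I1 y τ) = I2 y t from by simp only [I1, I2]]
    simp only [smul_eq_mul, mul_one, I2]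
    ring
  have hI1dy : I1 (deriv y) t = y 1 - y t := ftc _ hd0 hc1 t 1
  have hb3 : deriv (deriv y) 1 = -(κ * l1) / (1 - κ * l2) * y 1 := by
    field_simp
    linarith
  have hb4 : deriv (deriv (deriv y)) 1 = -(κ * l1 + l2) / (1 - κ * l2) * deriv y 1 := by
    field_simp
    linarith
  rw [outer, hb3, hb4, L2, hI1dy, ha, hb]
  field_simp
  ring
end

section
/- Let κ ≥ 0 and λ0 = (λ01, λ02) with λ01 > 0 and 1 − κ λ02 > 0. Set p = (κλ01+λ02)/(1−κλ02), q = λ01/(1−κλ02), r01 = √( √(q + (p/2)²) + p/2 ), r02 = √( √(q + (p/2)²) − p/2 ), and suppose the denominator r01² sin r01 + r01 r02 sinh r02 + (κλ01/(1−κλ02))((r01/r02) sinh r02 − sin r01) is nonzero; define D = [r01² cos r01 + r02² cosh r02 + (κλ01/(1−κλ02))(cosh r02 − cos r01)] / [r01² sin r01 + r01 r02 sinh r02 + (κλ01/(1−κλ02))((r01/r02) sinh r02 − sin r01)]. If f(λ01, λ02) = 0, then for any C ≠ 0 the function y_l(t) = C( cos(r01 t) − cosh(r02 t) − D( sin(r01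 t) − (r01/r02) sinh(r02 t) ) ) is a not-identically-zero solution of L⁴(λ0)y = 0 on [0,1] satisfying all four boundary conditions: y(0) = 0, y'(0) = 0, y''(1)(1−κλ02) + κλ01 y(1) = 0, and y'''(1)(1−κλ02) + (κλ01+λ02) y'(1) = 0. -/
open Set Filter


lemma hdYl0 (a b D C : ℝ) (hb : b ≠ 0) (t : ℝ) :
    HasDerivAt (fun t => C * (Real.cos (a*t) - Real.cosh (b*t)
      - D * (Real.sin (a*t) - a / b * Real.sinh (b*t))))
    (C * (-(a * Real.sin (a*t)) - b * Real.sinh (b*t)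
      - D * (a * Real.cos (a*t) - a * Real.cosh (b*t)))) t := by
  have hA : HasDerivAt (fun t : ℝ => a*t) a t := by simpa using (hasDerivAt_id t).const_mul a
  have hB : HasDerivAt (fun t : ℝ => b*t) b t := by simpa using (hasDerivAt_id t).const_mul b
  have h := ((hA.cos.sub hB.cosh).sub
    ((hA.sin.sub (hB.sinh.const_mul (a/b))).const_mul D)).const_mul C
  refine h.congr_deriv ?_
  field_simp

lemma hdYl1 (a b D C : ℝ) (t : ℝ) :
    HasDerivAt (fun t => C * (-(a * Real.sin (a*t)) - b * Real.sinh (b*t)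
      - D * (a * Real.cos (a*t) - a * Real.cosh (b*t))))
    (C * (-(a^2 * Real.cos (a*t)) - b^2 * Real.cosh (b*t)
      - D * (-(a^2 * Real.sin (a*t)) - a*b * Real.sinh (b*t)))) t := by
  have hA : HasDerivAt (fun t : ℝ => a*t) a t := by simpa using (hasDerivAt_id t).const_mul a
  have hB : HasDerivAt (fun t : ℝ => b*t) b t := by simpa using (hasDerivAt_id t).const_mul b
  have h := (((hA.sin.const_mul a).neg.sub (hB.sinh.const_mul b)).sub
    (((hA.cos.const_mul a).sub (hB.cosh.const_mul a)).const_mul D)).const_mul C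
  refine h.congr_deriv ?_
  ring

lemma hdYl2 (a b D C : ℝ) (t : ℝ) :
    HasDerivAt (fun t => C * (-(a^2 * Real.cos (a*t)) - b^2 * Real.cosh (b*t)
      - D * (-(a^2 * Real.sin (a*t)) - a*b * Real.sinh (b*t))))
    (C * (a^3 * Real.sin (a*t) - b^3 * Real.sinh (b*t)
      - D * (-(a^3 * Real.cos (a*t)) - a*b^2 * Real.cosh (b*t)))) t := by
  have hA : HasDerivAt (fun t : ℝ => a*t) a t := by simpa using (hasDerivAt_id t).const_mul a
  have hB : HasDerivAt (fun t : ℝ => b*t) b t := by simpa using (hasDerivAt_id t).const_mul b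
  have h := (((hA.cos.const_mul (a^2)).neg.sub (hB.cosh.const_mul (b^2))).sub
    (((hA.sin.const_mul (a^2)).neg.sub (hB.sinh.const_mul (a*b))).const_mul D)).const_mul C
  refine h.congr_deriv ?_
  ring

lemma hdYl3 (a b D C : ℝ) (t : ℝ) :
    HasDerivAt (fun t => C * (a^3 * Real.sin (a*t) - b^3 * Real.sinh (b*t)
      - D * (-(a^3 * Real.cos (a*t)) - a*b^2 * Real.cosh (b*t))))
    (C * (a^4 * Real.cos (a*t) - b^4 * Real.cosh (b*t)
      - D * (a^4 * Real.sin (a*t) - a*b^3 * Real.sinh (b*t)))) t := by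
  have hA : HasDerivAt (fun t : ℝ => a*t) a t := by simpa using (hasDerivAt_id t).const_mul a
  have hB : HasDerivAt (fun t : ℝ => b*t) b t := by simpa using (hasDerivAt_id t).const_mul b
  have h := (((hA.sin.const_mul (a^3)).sub (hB.sinh.const_mul (b^3))).sub
    (((hA.cos.const_mul (a^3)).neg.sub (hB.cosh.const_mul (a*b^2))).const_mul D)).const_mul C
  refine h.congr_deriv ?_
  ring

lemma keyE (a b k s c S Ch : ℝ)
    (hsc : s ^ 2 + c ^ 2 = 1) (hch : Ch ^ 2 - S ^ 2 = 1) :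
    (a*b^2*s - a^2*b*S) * (a^2*s*b + a*b*S*b + k*(a*S - s*b))
      + (a^2*c + b^2*Ch + k*(Ch - c)) * ((a*b^2*c + a^3*Ch) * b)
    = b * (a * (2*a^2*b^2 + k*(a^2-b^2) + a*b*(2*k-(a^2-b^2))*s*S
        + ((a^2-b^2)^2+2*a^2*b^2-k*(a^2-b^2))*c*Ch)) := by
  linear_combination (b*(a^3*b^2 - k*a*b^2)) * hsc + (b*(a^3*b^2 + k*a^3)) * hch


open Set

/-- The frequency parameter `r1(λ1, λ2)`. -/
noncomputable def rr1 (κ l1 l2 : ℝ) : ℝ :=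
  Real.sqrt (Real.sqrt (l1 / (1 - κ * l2) + ((κ * l1 + l2) / (2 * (1 - κ * l2))) ^ 2)
    + (κ * l1 + l2) / (2 * (1 - κ * l2)))

/-- The frequency parameter `r2(λ1, λ2)`. -/
noncomputable def rr2 (κ l1 l2 : ℝ) : ℝ :=
  Real.sqrt (Real.sqrt (l1 / (1 - κ * l2) + ((κ * l1 + l2) / (2 * (1 - κ * l2))) ^ 2)
    - (κ * l1 + l2) / (2 * (1 - κ * l2)))

/-- The interaction-curve function `f(λ1, λ2)`. -/
noncomputable def fInt (κ l1 l2 : ℝ) : ℝ :=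
  Real.sqrt (l1 / (1 - κ * l2)) *
    (2 * l1 + κ * l1 * (κ * l1 - l2)
      + (2 * l1 + l2 ^ 2 - κ * l1 * l2) * Real.cos (rr1 κ l1 l2) * Real.cosh (rr2 κ l1 l2)
      - Real.sqrt (l1 / (1 - κ * l2)) * (l2 - κ * (l1 - κ * l1 * l2 + l2 ^ 2)) *
          Real.sin (rr1 κ l1 l2) * Real.sinh (rr2 κ l1 l2))

set_option maxHeartbeats 2000000 in
/-- on the interaction curve `f(λ01, λ02) = 0` the explicit buckling
mode `y_l` is a nontrivial solution of the linearized fourth-order boundary value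
problem `L⁴(λ0)y = 0` with all four boundary conditions. -/
theorem stmt10 (κ l01 l02 : ℝ) (hκ : 0 ≤ κ) (hl1 : 0 < l01) (hl2 : 0 < 1 - κ * l02)
    (p q r01 r02 : ℝ)
    (hp : p = (κ * l01 + l02) / (1 - κ * l02))
    (hq : q = l01 / (1 - κ * l02))
    (hr01 : r01 = Real.sqrt (Real.sqrt (q + (p / 2) ^ 2) + p / 2))
    (hr02 : r02 = Real.sqrt (Real.sqrt (q + (p / 2) ^ 2) - p / 2))
    (hden : r01 ^ 2 * Real.sin r01 + r01 * r02 * Real.sinh r02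
      + κ * l01 / (1 - κ * l02) * (r01 / r02 * Real.sinh r02 - Real.sin r01) ≠ 0)
    (D : ℝ)
    (hD : D = (r01 ^ 2 * Real.cos r01 + r02 ^ 2 * Real.cosh r02
        + κ * l01 / (1 - κ * l02) * (Real.cosh r02 - Real.cos r01)) /
      (r01 ^ 2 * Real.sin r01 + r01 * r02 * Real.sinh r02
        + κ * l01 / (1 - κ * l02) * (r01 / r02 * Real.sinh r02 - Real.sin r01)))
    (hf : fInt κ l01 l02 = 0)
    (C : ℝ) (hC : C ≠ 0) (yl : ℝ → ℝ)
    (hyl : yl = fun t => C * (Real.cos (r01 * t) - Real.cosh (r02 * t)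
      - D * (Real.sin (r01 * t) - r01 / r02 * Real.sinh (r02 * t)))) :
    (∃ t ∈ Icc (0:ℝ) 1, yl t ≠ 0) ∧
    (∀ t ∈ Icc (0:ℝ) 1, L4 κ l01 l02 yl t = 0) ∧
    yl 0 = 0 ∧ deriv yl 0 = 0 ∧
    deriv (deriv yl) 1 * (1 - κ * l02) + κ * l01 * yl 1 = 0 ∧
    deriv (deriv (deriv yl)) 1 * (1 - κ * l02) + (κ * l01 + l02) * deriv yl 1 = 0 := by
  -- basic positivity facts
  have hdne : (1 - κ * l02) ≠ 0 := ne_of_gt hl2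
  have hq0 : 0 < q := by rw [hq]; exact div_pos hl1 hl2
  have hRnn : (0:ℝ) ≤ q + (p/2)^2 := by positivity
  have hR2 : Real.sqrt (q + (p/2)^2) ^ 2 = q + (p/2)^2 := Real.sq_sqrt hRnn
  have hRgt : |p/2| < Real.sqrt (q + (p/2)^2) := by
    have h1 : Real.sqrt ((p/2)^2) < Real.sqrt (q + (p/2)^2) :=
      Real.sqrt_lt_sqrt (by positivity) (by linarith)
    simpa [Real.sqrt_sq_eq_abs] using h1
  have habs1 : -(p/2) ≤ |p/2| := neg_le_abs (p/2)
  have habs2 : p/2 ≤ |p/2| := le_abs_self (p/2)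
  have hA2 : r01 ^ 2 = Real.sqrt (q + (p/2)^2) + p/2 := by
    rw [hr01]; exact Real.sq_sqrt (by linarith)
  have hB2 : r02 ^ 2 = Real.sqrt (q + (p/2)^2) - p/2 := by
    rw [hr02]; exact Real.sq_sqrt (by linarith)
  have ha0 : 0 < r01 := by rw [hr01]; exact Real.sqrt_pos.mpr (by linarith)
  have hb0 : 0 < r02 := by rw [hr02]; exact Real.sqrt_pos.mpr (by linarith)
  have hab : r01 ^ 2 * r02 ^ 2 = q := by rw [hA2, hB2]; linear_combination hR2
  have hmp : r01 ^ 2 - r02 ^ 2 = p := by rw [hA2, hB2]; ring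
  have ha2 : r01 ^ 2 * r02 ^ 2 * (1 - κ * l02) = l01 := by
    rw [hab, hq]; field_simp
  have hpb : (r01 ^ 2 - r02 ^ 2) * (1 - κ * l02) = κ * l01 + l02 := by
    rw [hmp, hp]; field_simp
  have hsqq : Real.sqrt (l01 / (1 - κ * l02)) = r01 * r02 := by
    rw [← hq, ← hab, show r01 ^ 2 * r02 ^ 2 = (r01 * r02) ^ 2 from by ring,
      Real.sqrt_sq (by positivity)]
  have e1 : (κ * l01 + l02) / (2 * (1 - κ * l02)) = p / 2 := by rw [hp, div_div]; congr 1; ring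
  have hrr1 : rr1 κ l01 l02 = r01 := by rw [rr1, ← hq, e1, ← hr01]
  have hrr2 : rr2 κ l01 l02 = r02 := by rw [rr2, ← hq, e1, ← hr02]
  -- derivative formulas
  have hd1 : deriv yl = fun t => C * (-(r01 * Real.sin (r01*t)) - r02 * Real.sinh (r02*t)
      - D * (r01 * Real.cos (r01*t) - r01 * Real.cosh (r02*t))) := by
    funext t; rw [hyl]; exact (hdYl0 r01 r02 D C hb0.ne' t).deriv
  have hd2 : deriv (deriv yl) = fun t => C * (-(r01^2 * Real.cos (r01*t)) - r02^2 * Real.cosh (r02*t)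
      - D * (-(r01^2 * Real.sin (r01*t)) - r01*r02 * Real.sinh (r02*t))) := by
    rw [hd1]; funext t; exact (hdYl1 r01 r02 D C t).deriv
  have hd3 : deriv (deriv (deriv yl)) = fun t => C * (r01^3 * Real.sin (r01*t) - r02^3 * Real.sinh (r02*t)
      - D * (-(r01^3 * Real.cos (r01*t)) - r01*r02^2 * Real.cosh (r02*t))) := by
    rw [hd2]; funext t; exact (hdYl2 r01 r02 D C t).deriv
  have hd4 : deriv (deriv (deriv (deriv yl))) = fun t => C * (r01^4 * Real.cos (r01*t) - r02^4 * Real.cosh (r02*t)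
      - D * (r01^4 * Real.sin (r01*t) - r01*r02^3 * Real.sinh (r02*t))) := by
    rw [hd3]; funext t; exact (hdYl3 r01 r02 D C t).deriv
  have hDden : D * (r01 ^ 2 * Real.sin r01 + r01 * r02 * Real.sinh r02
      + κ * l01 / (1 - κ * l02) * (r01 / r02 * Real.sinh r02 - Real.sin r01))
      = r01 ^ 2 * Real.cos r01 + r02 ^ 2 * Real.cosh r02
      + κ * l01 / (1 - κ * l02) * (Real.cosh r02 - Real.cos r01) := by
    rw [hD]; exact div_mul_cancel₀ _ hden
  refine ⟨?_, ?_, ?_, ?_, ?_, ?_⟩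
  · -- nontriviality
    by_contra hcon
    push_neg at hcon
    have hz1 : ∀ t ∈ Ioo (0:ℝ) 1, deriv yl t = 0 := by
      intro t ht
      have hev : yl =ᶠ[nhds t] (fun _ => 0) := by
        filter_upwards [Ioo_mem_nhds ht.1 ht.2] with u hu
        exact hcon u ⟨le_of_lt hu.1, le_of_lt hu.2⟩
      rw [hev.deriv_eq]; exact deriv_const t 0
    have hz2 : ∀ t ∈ Ioo (0:ℝ) 1, deriv (deriv yl) t = 0 := by
      intro t ht
      have hev : deriv yl =ᶠ[nhds t] (fun _ => 0) := by
        filter_upwards [Ioo_mem_nhds ht.1 ht.2] with u hu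
        exact hz1 u hu
      rw [hev.deriv_eq]; exact deriv_const t 0
    have hcont : Continuous (deriv (deriv yl)) := by
      rw [hd2]; fun_prop
    haveI hne : (nhdsWithin (0:ℝ) (Ioo (0:ℝ) 1)).NeBot := by
      apply mem_closure_iff_nhdsWithin_neBot.mp
      rw [closure_Ioo (by norm_num : (0:ℝ) ≠ 1)]
      exact ⟨le_refl 0, zero_le_one⟩
    have h1 : Tendsto (deriv (deriv yl)) (nhdsWithin (0:ℝ) (Ioo (0:ℝ) 1))
        (nhds (deriv (deriv yl) 0)) := (hcont.tendsto 0).mono_left nhdsWithin_le_nhds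
    have h2 : Tendsto (deriv (deriv yl)) (nhdsWithin (0:ℝ) (Ioo (0:ℝ) 1)) (nhds 0) := by
      apply Tendsto.congr' _ tendsto_const_nhds
      filter_upwards [eventually_mem_nhdsWithin] with u hu
      exact (hz2 u hu).symm
    have h0 : deriv (deriv yl) 0 = 0 := (tendsto_nhds_unique h2 h1).symm
    rw [hd2] at h0
    simp only [mul_zero, Real.cos_zero, Real.cosh_zero, Real.sin_zero, Real.sinh_zero] at h0
    have : C * (-(r01^2) - r02^2) = 0 := by linarith [h0]
    rcases mul_eq_zero.mp this with h | h
    · exact hC h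
    · nlinarith [ha0, hb0]
  · -- the ODE
    intro t _
    rw [L4, hd4, hd2, hyl]
    simp only
    rw [← hp, ← hq, ← hmp, ← hab]
    field_simp
    ring
  · rw [hyl]; norm_num
  · rw [hd1]; norm_num
  · -- third boundary condition
    rw [hd2, hyl]
    simp only [mul_one]
    field_simp
    have hDden2 := congrArg (· * (r02 * (1 - κ * l02))) hDden
    field_simp at hDden2
    have hmul : r02 * (1 - κ * l02) ^ 2 ≠ 0 := mul_ne_zero hb0.ne' (pow_ne_zero 2 hdne)
    have hDden3 : D * ((r01 ^ 2 * Real.sin r01 + r01 * r02 * Real.sinh r02) * ((1 - κ * l02) * r02)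
          + κ * l01 * (r01 * Real.sinh r02 - r02 * Real.sin r01))
        = ((r01 ^ 2 * Real.cos r01 + r02 ^ 2 * Real.cosh r02) * (1 - κ * l02)
          + κ * l01 * (Real.cosh r02 - Real.cos r01)) * r02 := by
      apply mul_right_cancel₀ hmul
      linear_combination (r02 * (1 - κ * l02) ^ 2) * hDden2
    linear_combination C * hDden3
  · -- fourth boundary condition
    rw [hd3, hd1]
    simp only [mul_one]
    have hsc : Real.sin r01 ^ 2 + Real.cos r01 ^ 2 = 1 := Real.sin_sq_add_cos_sq r01
    have hch : Real.cosh r02 ^ 2 - Real.sinh r02 ^ 2 = 1 := Real.cosh_sq_sub_sinh_sq r02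
    have hkey := keyE r01 r02 (κ * l01 / (1 - κ * l02)) (Real.sin r01) (Real.cos r01)
      (Real.sinh r02) (Real.cosh r02) hsc hch
    have hk : κ * l01 / (1 - κ * l02) * (1 - κ * l02) = κ * l01 := div_mul_cancel₀ _ hdne
    have i1 : 2 * l01 + κ * l01 * (κ * l01 - l02)
        = (1 - κ * l02) ^ 2 * (2 * (r01 ^ 2 * r02 ^ 2)
          + κ * l01 / (1 - κ * l02) * (r01 ^ 2 - r02 ^ 2)) := by
      linear_combination (-(2 * (1 - κ * l02))) * ha2
        + (-((r01 ^ 2 - r02 ^ 2) * (1 - κ * l02))) * hk + (-(κ * l01)) * hpb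
    have i2 : 2 * l01 + l02 ^ 2 - κ * l01 * l02
        = (1 - κ * l02) ^ 2 * ((r01 ^ 2 - r02 ^ 2) ^ 2 + 2 * (r01 ^ 2 * r02 ^ 2)
          - κ * l01 / (1 - κ * l02) * (r01 ^ 2 - r02 ^ 2)) := by
      linear_combination (-((r01 ^ 2 - r02 ^ 2) * (1 - κ * l02) + l02)) * hpb
        + (-(2 * (1 - κ * l02))) * ha2 + ((r01 ^ 2 - r02 ^ 2) * (1 - κ * l02)) * hk
    have i3 : l02 - κ * (l01 - κ * l01 * l02 + l02 ^ 2)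
        = (1 - κ * l02) ^ 2 * ((r01 ^ 2 - r02 ^ 2)
          - 2 * (κ * l01 / (1 - κ * l02))) := by
      linear_combination (-(1 - κ * l02)) * hpb + (2 * (1 - κ * l02)) * hk
    have hbden : r02 * (r01 ^ 2 * Real.sin r01 + r01 * r02 * Real.sinh r02
      + κ * l01 / (1 - κ * l02) * (r01 / r02 * Real.sinh r02 - Real.sin r01))
        = r01 ^ 2 * Real.sin r01 * r02 + r01 * r02 * Real.sinh r02 * r02
          + κ * l01 / (1 - κ * l02) * (r01 * Real.sinh r02 - Real.sin r01 * r02) := by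
      field_simp
    have hfexp : fInt κ l01 l02
        = r01 * r02 * ((2 * l01 + κ * l01 * (κ * l01 - l02))
          + (2 * l01 + l02 ^ 2 - κ * l01 * l02) * Real.cos r01 * Real.cosh r02
          - r01 * r02 * (l02 - κ * (l01 - κ * l01 * l02 + l02 ^ 2))
              * Real.sin r01 * Real.sinh r02) := by
      rw [fInt, hrr1, hrr2, hsqq]
    have hbig : (1 - κ * l02) ^ 2 * (r02 *
        ((r01 * r02 ^ 2 * Real.sin r01 - r01 ^ 2 * r02 * Real.sinh r02) * (r01 ^ 2 * Real.sin r01 + r01 * r02 * Real.sinh r02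
      + κ * l01 / (1 - κ * l02) * (r01 / r02 * Real.sinh r02 - Real.sin r01))
          + (r01 ^ 2 * Real.cos r01 + r02 ^ 2 * Real.cosh r02
      + κ * l01 / (1 - κ * l02) * (Real.cosh r02 - Real.cos r01)) * (r01 * r02 ^ 2 * Real.cos r01 + r01 ^ 3 * Real.cosh r02)))
        = fInt κ l01 l02 := by
      rw [hfexp, i1, i2, i3]
      linear_combination ((1 - κ * l02) ^ 2) * hkey
        + ((1 - κ * l02) ^ 2 * (r01 * r02 ^ 2 * Real.sin r01
            - r01 ^ 2 * r02 * Real.sinh r02)) * hbden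
    have hE0 : (r01 * r02 ^ 2 * Real.sin r01 - r01 ^ 2 * r02 * Real.sinh r02) * (r01 ^ 2 * Real.sin r01 + r01 * r02 * Real.sinh r02
      + κ * l01 / (1 - κ * l02) * (r01 / r02 * Real.sinh r02 - Real.sin r01))
        + (r01 ^ 2 * Real.cos r01 + r02 ^ 2 * Real.cosh r02
      + κ * l01 / (1 - κ * l02) * (Real.cosh r02 - Real.cos r01)) * (r01 * r02 ^ 2 * Real.cos r01 + r01 ^ 3 * Real.cosh r02) = 0 := by
      have h2 := hbig
      rw [hf] at h2
      have hnz : (1 - κ * l02) ^ 2 * r02 ≠ 0 := mul_ne_zero (pow_ne_zero 2 hdne) hb0.ne'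
      have h4 : ((1 - κ * l02) ^ 2 * r02) *
          ((r01 * r02 ^ 2 * Real.sin r01 - r01 ^ 2 * r02 * Real.sinh r02) * (r01 ^ 2 * Real.sin r01 + r01 * r02 * Real.sinh r02
      + κ * l01 / (1 - κ * l02) * (r01 / r02 * Real.sinh r02 - Real.sin r01))
          + (r01 ^ 2 * Real.cos r01 + r02 ^ 2 * Real.cosh r02
      + κ * l01 / (1 - κ * l02) * (Real.cosh r02 - Real.cos r01)) * (r01 * r02 ^ 2 * Real.cos r01 + r01 ^ 3 * Real.cosh r02)) = 0 := by
        linear_combination h2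
      exact (mul_eq_zero.mp h4).resolve_left hnz
    have hXY : (r01 * r02 ^ 2 * Real.sin r01 - r01 ^ 2 * r02 * Real.sinh r02)
        + D * (r01 * r02 ^ 2 * Real.cos r01 + r01 ^ 3 * Real.cosh r02) = 0 := by
      have h5 : (r01 ^ 2 * Real.sin r01 + r01 * r02 * Real.sinh r02
          + κ * l01 / (1 - κ * l02) * (r01 / r02 * Real.sinh r02 - Real.sin r01)) *
          ((r01 * r02 ^ 2 * Real.sin r01 - r01 ^ 2 * r02 * Real.sinh r02)
          + D * (r01 * r02 ^ 2 * Real.cos r01 + r01 ^ 3 * Real.cosh r02)) = 0 := by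
        linear_combination hE0 + (r01 * r02 ^ 2 * Real.cos r01 + r01 ^ 3 * Real.cosh r02) * hDden
      exact (mul_eq_zero.mp h5).resolve_left hden
    have hpl : κ * l01 + l02 = p * (1 - κ * l02) := by
      rw [hp]; field_simp
    rw [hpl, ← hmp]
    linear_combination (C * (1 - κ * l02)) * hXY
end

section
/- Let κ ≥ 0 and λ = (λ1, λ2) with λ1 > 0 and 1 − κ λ2 > 0. If there exists a four times continuously differentiable function y : [0,1] → ℝ, not identically zero, satisfying L⁴(λ)y(t) = 0 on [0,1] together with the boundary conditions y(0) = 0, y'(0) = 0, y''(1)(1−κλ2) + κλ1 y(1) = 0, and y'''(1)(1−κλ2) + (κλ1+λ2) y'(1) = 0, then f(λ1, λ2) = 0. -/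
open Set

/-- projections -/
noncomputable def pr0 : (ℝ × ℝ × ℝ × ℝ) →L[ℝ] ℝ := ContinuousLinearMap.fst ℝ ℝ (ℝ × ℝ × ℝ)
noncomputable def pr1 : (ℝ × ℝ × ℝ × ℝ) →L[ℝ] ℝ :=
  (ContinuousLinearMap.fst ℝ ℝ (ℝ × ℝ)).comp (ContinuousLinearMap.snd ℝ ℝ (ℝ × ℝ × ℝ))
noncomputable def pr2 : (ℝ × ℝ × ℝ × ℝ) →L[ℝ] ℝ :=
  (ContinuousLinearMap.fst ℝ ℝ ℝ).comp ((ContinuousLinearMap.snd ℝ ℝ (ℝ × ℝ)).comp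
    (ContinuousLinearMap.snd ℝ ℝ (ℝ × ℝ × ℝ)))
noncomputable def pr3 : (ℝ × ℝ × ℝ × ℝ) →L[ℝ] ℝ :=
  (ContinuousLinearMap.snd ℝ ℝ ℝ).comp ((ContinuousLinearMap.snd ℝ ℝ (ℝ × ℝ)).comp
    (ContinuousLinearMap.snd ℝ ℝ (ℝ × ℝ × ℝ)))

/-- The companion linear vector field for the 4th-order ODE. -/
noncomputable def vecA (a b : ℝ) : (ℝ × ℝ × ℝ × ℝ) →L[ℝ] (ℝ × ℝ × ℝ × ℝ) :=
  pr1.prod (pr2.prod (pr3.prod (b • pr0 - a • pr2)))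

lemma vecA_apply (a b : ℝ) (x : ℝ × ℝ × ℝ × ℝ) :
    vecA a b x = (x.2.1, x.2.2.1, x.2.2.2, b * x.1 - a * x.2.2.1) := rfl

lemma ode4_unique (a b : ℝ) (f g : ℝ → ℝ × ℝ × ℝ × ℝ)
    (hf : Continuous f) (hg : Continuous g)
    (hf' : ∀ t ∈ Icc (0:ℝ) 1, HasDerivAt f (vecA a b (f t)) t)
    (hg' : ∀ t ∈ Icc (0:ℝ) 1, HasDerivAt g (vecA a b (g t)) t)
    (h0 : f 0 = g 0) : EqOn f g (Icc 0 1) :=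
  ODE_solution_unique (v := fun _ x => vecA a b x)
    (fun _ => (vecA a b).lipschitz) hf.continuousOn
    (fun t ht => (hf' t (Ico_subset_Icc_self ht)).hasDerivWithinAt) hg.continuousOn
    (fun t ht => (hg' t (Ico_subset_Icc_self ht)).hasDerivWithinAt) h0

/-- basic trig/hyperbolic mixture -/
noncomputable def mixfn (a b c d r1 r2 : ℝ) : ℝ → ℝ := fun t =>
  a * Real.cos (r1 * t) + b * Real.sin (r1 * t) + c * Real.cosh (r2 * t) + d * Real.sinh (r2 * t)

lemma mixfn_zero (a b c d r1 r2 : ℝ) : mixfn a b c d r1 r2 0 = a + c := by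
  simp [mixfn]

lemma mixfn_one (a b c d r1 r2 : ℝ) :
    mixfn a b c d r1 r2 1 = a * Real.cos r1 + b * Real.sin r1 + c * Real.cosh r2 + d * Real.sinh r2 := by
  simp [mixfn]

lemma mixfn_cont (a b c d r1 r2 : ℝ) : Continuous (mixfn a b c d r1 r2) := by
  unfold mixfn; fun_prop

lemma mixfn_hasDerivAt (a b c d a' b' c' d' r1 r2 t : ℝ)
    (h1 : a' = b * r1) (h2 : b' = -(a * r1)) (h3 : c' = d * r2) (h4 : d' = c * r2) :
    HasDerivAt (mixfn a b c d r1 r2) (mixfn a' b' c' d' r1 r2 t) t := by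
  subst h1 h2 h3 h4
  have hr1 : HasDerivAt (fun s : ℝ => r1 * s) r1 t := by
    simpa using (hasDerivAt_id t).const_mul r1
  have hr2' : HasDerivAt (fun s : ℝ => r2 * s) r2 t := by
    simpa using (hasDerivAt_id t).const_mul r2
  have h := (((hr1.cos.const_mul a).add (hr1.sin.const_mul b)).add
    ((hr2'.cosh.const_mul c))).add ((hr2'.sinh.const_mul d))
  refine h.congr_deriv ?_
  simp only [mixfn]
  ring

/-- existence of a nontrivial solution of the linearized fourth-order
boundary value problem forces the load parameters to lie on the interaction curve. -/
theorem stmt11 (κ l1 l2 : ℝ) (hκ : 0 ≤ κ) (hl1 : 0 < l1) (hl2 : 0 < 1 - κ * l2)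
    (hex : ∃ y : ℝ → ℝ, ContDiff ℝ 4 y ∧
      (∃ t ∈ Icc (0:ℝ) 1, y t ≠ 0) ∧
      (∀ t ∈ Icc (0:ℝ) 1, L4 κ l1 l2 y t = 0) ∧
      y 0 = 0 ∧ deriv y 0 = 0 ∧
      deriv (deriv y) 1 * (1 - κ * l2) + κ * l1 * y 1 = 0 ∧
      deriv (deriv (deriv y)) 1 * (1 - κ * l2) + (κ * l1 + l2) * deriv y 1 = 0) :
    fInt κ l1 l2 = 0 := by
  obtain ⟨y, hy4, ⟨t0, ht0, hyt0⟩, hODE, hy0, hy'0, hBC1, hBC2⟩ := hex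
  set d1 := deriv y with hd1def
  set d2 := deriv d1 with hd2def
  set d3 := deriv d2 with hd3def
  set d4 := deriv d3 with hd4def
  set M := 1 - κ * l2 with hMdef
  have hM0 : (0:ℝ) < M := hl2
  have hMne : M ≠ 0 := ne_of_gt hM0
  set A' := (κ * l1 + l2) / M with hAdef
  set B' := l1 / M with hBdef
  have hB'pos : 0 < B' := div_pos hl1 hM0
  set S := Real.sqrt (B' + (A' / 2) ^ 2) with hSdef
  have hS2 : S ^ 2 = B' + (A' / 2) ^ 2 := Real.sq_sqrt (by positivity)
  have hS0 : 0 ≤ S := Real.sqrt_nonneg _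
  have hSgt : |A' / 2| < S := by
    nlinarith [sq_abs (A' / 2), abs_nonneg (A' / 2)]
  have habs1 : -(A' / 2) ≤ |A' / 2| := neg_le_abs _
  have habs2 : A' / 2 ≤ |A' / 2| := le_abs_self _
  set r1 := rr1 κ l1 l2 with hr1def
  set r2 := rr2 κ l1 l2 with hr2def
  have hX : l1 / (1 - κ * l2) + ((κ * l1 + l2) / (2 * (1 - κ * l2))) ^ 2 = B' + (A' / 2) ^ 2 := by
    rw [hBdef, hAdef, hMdef]
    field_simp
  have hY : (κ * l1 + l2) / (2 * (1 - κ * l2)) = A' / 2 := by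
    rw [hAdef, hMdef, div_div, mul_comm (1 - κ * l2) 2]
  have hr1' : r1 = Real.sqrt (S + A' / 2) := by
    rw [hr1def, rr1, hX, hY, ← hSdef]
  have hr2' : r2 = Real.sqrt (S - A' / 2) := by
    rw [hr2def, rr2, hX, hY, ← hSdef]
  have hr1pos : 0 < r1 := by
    rw [hr1']; exact Real.sqrt_pos.mpr (by linarith)
  have hr2pos : 0 < r2 := by
    rw [hr2']; exact Real.sqrt_pos.mpr (by linarith)
  have hr1sq : r1 ^ 2 = S + A' / 2 := by
    rw [hr1']; exact Real.sq_sqrt (by linarith)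
  have hr2sq : r2 ^ 2 = S - A' / 2 := by
    rw [hr2']; exact Real.sq_sqrt (by linarith)
  have hprod : r1 ^ 2 * r2 ^ 2 = B' := by
    rw [hr1sq, hr2sq]; linear_combination hS2
  have hr12 : r1 ^ 2 - r2 ^ 2 = A' := by
    rw [hr1sq, hr2sq]; ring
  have hl1'' : l1 = M * (r1 ^ 2 * r2 ^ 2) := by
    rw [hprod, hBdef]; field_simp
  have hMA : M * (r1 ^ 2 - r2 ^ 2) = κ * l1 + l2 := by
    rw [hr12, hAdef]; field_simp
  have hl2'' : l2 = M * (r1 ^ 2 - r2 ^ 2) - κ * (M * (r1 ^ 2 * r2 ^ 2)) := by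
    linear_combination (-1) * hMA - κ * hl1''
  have hE : M * (1 + κ * (r1 ^ 2 - r2 ^ 2) - κ ^ 2 * (r1 ^ 2 * r2 ^ 2)) = 1 := by
    linear_combination κ ^ 2 * hl1'' + κ * hMA + hMdef
  have h3 : Real.sin r1 ^ 2 + Real.cos r1 ^ 2 = 1 := Real.sin_sq_add_cos_sq r1
  have h4 : Real.cosh r2 ^ 2 - Real.sinh r2 ^ 2 = 1 := Real.cosh_sq_sub_sinh_sq r2
  have hfrac : l1 / M = (r1 * r2) ^ 2 := by
    rw [hl1'']; field_simp
  have hsb' : Real.sqrt (l1 / M) = r1 * r2 := by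
    rw [hfrac]; exact Real.sqrt_sq (by positivity)
  -- differentiability facts
  have hdiffy : Differentiable ℝ y := hy4.differentiable (by norm_num)
  have hdiff1 : Differentiable ℝ d1 := by
    rw [hd1def]
    have := (ContDiff.iterate_deriv' 3 1
      (show ContDiff ℝ ((3 + 1 : ℕ) : WithTop ℕ∞) y by exact_mod_cast hy4)).differentiable
      (by norm_num)
    simpa [Function.iterate_succ_apply'] using this
  have hdiff2 : Differentiable ℝ d2 := by
    rw [hd2def, hd1def]
    have := (ContDiff.iterate_deriv' 2 2
      (show ContDiff ℝ ((2 + 2 : ℕ) : WithTop ℕ∞) y by exact_mod_cast hy4)).differentiable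
      (by norm_num)
    simpa [Function.iterate_succ_apply'] using this
  have hdiff3 : Differentiable ℝ d3 := by
    rw [hd3def, hd2def, hd1def]
    have := (ContDiff.iterate_deriv' 1 3
      (show ContDiff ℝ ((1 + 3 : ℕ) : WithTop ℕ∞) y by exact_mod_cast hy4)).differentiable
      (by norm_num)
    simpa [Function.iterate_succ_apply'] using this
  have hyd : ∀ t, HasDerivAt y (d1 t) t := by
    intro t; rw [hd1def]; exact (hdiffy t).hasDerivAt
  have hd1d : ∀ t, HasDerivAt d1 (d2 t) t := by
    intro t; rw [hd2def]; exact (hdiff1 t).hasDerivAt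
  have hd2d : ∀ t, HasDerivAt d2 (d3 t) t := by
    intro t; rw [hd3def]; exact (hdiff2 t).hasDerivAt
  have hd3d : ∀ t, HasDerivAt d3 (d4 t) t := by
    intro t; rw [hd4def]; exact (hdiff3 t).hasDerivAt
  -- the ODE in first-order form
  have hODE' : ∀ t ∈ Icc (0:ℝ) 1, d4 t = B' * y t - A' * d2 t := by
    intro t ht
    have h := hODE t ht
    simp only [L4] at h
    rw [← hd1def, ← hd2def, ← hd3def, ← hd4def, ← hMdef, ← hAdef, ← hBdef] at h
    linarith
  -- the comparison solution
  have hD : (0:ℝ) < r1 ^ 2 + r2 ^ 2 := by positivity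
  have hDne : r1 ^ 2 + r2 ^ 2 ≠ 0 := ne_of_gt hD
  set α := d2 0 / (r1 ^ 2 + r2 ^ 2) with hαdef
  set β := d3 0 / (r1 * r2 * (r1 ^ 2 + r2 ^ 2)) with hβdef
  have hF' : ∀ t ∈ Icc (0:ℝ) 1,
      HasDerivAt (fun t => (y t, d1 t, d2 t, d3 t))
        (vecA A' B' ((fun t => (y t, d1 t, d2 t, d3 t)) t)) t := by
    intro t ht
    have hds := (hyd t).prodMk ((hd1d t).prodMk ((hd2d t).prodMk (hd3d t)))
    convert hds using 1
    show vecA A' B' (y t, d1 t, d2 t, d3 t) = (d1 t, d2 t, d3 t, d4 t)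
    rw [vecA_apply]
    refine Prod.ext rfl (Prod.ext rfl (Prod.ext rfl ?_))
    show B' * y t - A' * d2 t = d4 t
    linarith [hODE' t ht]
  have hG' : ∀ t ∈ Icc (0:ℝ) 1,
      HasDerivAt (fun t => (mixfn (-α) (-(β*r2)) α (β*r1) r1 r2 t, mixfn (-(β*r1*r2)) (α*r1) (β*r1*r2) (α*r2) r1 r2 t, mixfn (α*r1^2) (β*r1^2*r2) (α*r2^2) (β*r1*r2^2) r1 r2 t, mixfn (β*r1^3*r2) (-(α*r1^3)) (β*r1*r2^3) (α*r2^3) r1 r2 t))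
        (vecA A' B' ((fun t => (mixfn (-α) (-(β*r2)) α (β*r1) r1 r2 t, mixfn (-(β*r1*r2)) (α*r1) (β*r1*r2) (α*r2) r1 r2 t, mixfn (α*r1^2) (β*r1^2*r2) (α*r2^2) (β*r1*r2^2) r1 r2 t, mixfn (β*r1^3*r2) (-(α*r1^3)) (β*r1*r2^3) (α*r2^3) r1 r2 t)) t)) t := by
    intro t _
    have h0 : HasDerivAt (mixfn (-α) (-(β*r2)) α (β*r1) r1 r2) ((mixfn (-(β*r1*r2)) (α*r1) (β*r1*r2) (α*r2) r1 r2) t) t :=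
      mixfn_hasDerivAt _ _ _ _ _ _ _ _ _ _ _ (by ring) (by ring) (by ring) (by ring)
    have h1 : HasDerivAt (mixfn (-(β*r1*r2)) (α*r1) (β*r1*r2) (α*r2) r1 r2) ((mixfn (α*r1^2) (β*r1^2*r2) (α*r2^2) (β*r1*r2^2) r1 r2) t) t :=
      mixfn_hasDerivAt _ _ _ _ _ _ _ _ _ _ _ (by ring) (by ring) (by ring) (by ring)
    have h2 : HasDerivAt (mixfn (α*r1^2) (β*r1^2*r2) (α*r2^2) (β*r1*r2^2) r1 r2) ((mixfn (β*r1^3*r2) (-(α*r1^3)) (β*r1*r2^3) (α*r2^3) r1 r2) t) t :=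
      mixfn_hasDerivAt _ _ _ _ _ _ _ _ _ _ _ (by ring) (by ring) (by ring) (by ring)
    have h3' : HasDerivAt (mixfn (β*r1^3*r2) (-(α*r1^3)) (β*r1*r2^3) (α*r2^3) r1 r2) ((mixfn (-(α*r1^4)) (-(β*r1^4*r2)) (α*r2^4) (β*r1*r2^4) r1 r2) t) t :=
      mixfn_hasDerivAt _ _ _ _ _ _ _ _ _ _ _ (by ring) (by ring) (by ring) (by ring)
    have hds := h0.prodMk (h1.prodMk (h2.prodMk h3'))
    convert hds using 1
    show vecA A' B' ((mixfn (-α) (-(β*r2)) α (β*r1) r1 r2) t, (mixfn (-(β*r1*r2)) (α*r1) (β*r1*r2) (α*r2) r1 r2) t, (mixfn (α*r1^2) (β*r1^2*r2) (α*r2^2) (β*r1*r2^2) r1 r2) t, (mixfn (β*r1^3*r2) (-(α*r1^3)) (β*r1*r2^3) (α*r2^3) r1 r2) t)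
      = ((mixfn (-(β*r1*r2)) (α*r1) (β*r1*r2) (α*r2) r1 r2) t, (mixfn (α*r1^2) (β*r1^2*r2) (α*r2^2) (β*r1*r2^2) r1 r2) t, (mixfn (β*r1^3*r2) (-(α*r1^3)) (β*r1*r2^3) (α*r2^3) r1 r2) t, (mixfn (-(α*r1^4)) (-(β*r1^4*r2)) (α*r2^4) (β*r1*r2^4) r1 r2) t)
    rw [vecA_apply]
    refine Prod.ext rfl (Prod.ext rfl (Prod.ext rfl ?_))
    show B' * (mixfn (-α) (-(β*r2)) α (β*r1) r1 r2) t - A' * (mixfn (α*r1^2) (β*r1^2*r2) (α*r2^2) (β*r1*r2^2) r1 r2) t = (mixfn (-(α*r1^4)) (-(β*r1^4*r2)) (α*r2^4) (β*r1*r2^4) r1 r2) t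
    rw [← hr12, ← hprod]
    simp only [mixfn]
    ring
  have hFc : Continuous (fun t => (y t, d1 t, d2 t, d3 t)) :=
    (hdiffy.continuous).prodMk ((hdiff1.continuous).prodMk
      ((hdiff2.continuous).prodMk (hdiff3.continuous)))
  have hGc : Continuous (fun t => (mixfn (-α) (-(β*r2)) α (β*r1) r1 r2 t, mixfn (-(β*r1*r2)) (α*r1) (β*r1*r2) (α*r2) r1 r2 t, mixfn (α*r1^2) (β*r1^2*r2) (α*r2^2) (β*r1*r2^2) r1 r2 t, mixfn (β*r1^3*r2) (-(α*r1^3)) (β*r1*r2^3) (α*r2^3) r1 r2 t)) :=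
    (mixfn_cont _ _ _ _ _ _).prodMk ((mixfn_cont _ _ _ _ _ _).prodMk
      ((mixfn_cont _ _ _ _ _ _).prodMk (mixfn_cont _ _ _ _ _ _)))
  have h0 : (fun t => (y t, d1 t, d2 t, d3 t)) 0
      = (fun t => (mixfn (-α) (-(β*r2)) α (β*r1) r1 r2 t, mixfn (-(β*r1*r2)) (α*r1) (β*r1*r2) (α*r2) r1 r2 t, mixfn (α*r1^2) (β*r1^2*r2) (α*r2^2) (β*r1*r2^2) r1 r2 t, mixfn (β*r1^3*r2) (-(α*r1^3)) (β*r1*r2^3) (α*r2^3) r1 r2 t)) 0 := by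
    show (y 0, d1 0, d2 0, d3 0) = _
    refine Prod.ext ?_ (Prod.ext ?_ (Prod.ext ?_ ?_))
    · show y 0 = (mixfn (-α) (-(β*r2)) α (β*r1) r1 r2) 0
      rw [mixfn_zero, hy0]; ring
    · show d1 0 = (mixfn (-(β*r1*r2)) (α*r1) (β*r1*r2) (α*r2) r1 r2) 0
      rw [mixfn_zero, hy'0]; ring
    · show d2 0 = (mixfn (α*r1^2) (β*r1^2*r2) (α*r2^2) (β*r1*r2^2) r1 r2) 0
      rw [mixfn_zero, hαdef]; field_simp
    · show d3 0 = (mixfn (β*r1^3*r2) (-(α*r1^3)) (β*r1*r2^3) (α*r2^3) r1 r2) 0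
      rw [mixfn_zero, hβdef]; field_simp
  have hEq := ode4_unique A' B' _ _ hFc hGc hF' hG' h0
  have hF1 := hEq (show (1:ℝ) ∈ Icc (0:ℝ) 1 by constructor <;> norm_num)
  simp only [Prod.mk.injEq] at hF1
  obtain ⟨e0, e1, e2, e3⟩ := hF1
  rw [mixfn_one] at e0 e1 e2 e3
  -- boundary conditions as a linear system in (α, β)
  have eq1 : α * (M*(r2^2*Real.cosh r2 + r1^2*Real.cos r1) + κ*l1*(Real.cosh r2 - Real.cos r1)) + β * (M*(r1*r2^2*Real.sinh r2 + r1^2*r2*Real.sin r1) + κ*l1*(r1*Real.sinh r2 - r2*Real.sin r1)) = 0 := by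
    linear_combination hBC1 - M * e2 - κ * l1 * e0
  have eq2 : α * (M*(r2^3*Real.sinh r2 - r1^3*Real.sin r1) + (κ*l1+l2)*(r2*Real.sinh r2 + r1*Real.sin r1)) + β * (M*(r1*r2^3*Real.cosh r2 + r1^3*r2*Real.cos r1) + (κ*l1+l2)*(r1*r2*Real.cosh r2 - r1*r2*Real.cos r1)) = 0 := by
    linear_combination hBC2 - M * e3 - (κ * l1 + l2) * e1
  -- nontriviality
  have hdet : (M*(r2^2*Real.cosh r2 + r1^2*Real.cos r1) + κ*l1*(Real.cosh r2 - Real.cos r1)) * (M*(r1*r2^3*Real.cosh r2 + r1^3*r2*Real.cos r1) + (κ*l1+l2)*(r1*r2*Real.cosh r2 - r1*r2*Real.cos r1)) - (M*(r1*r2^2*Real.sinh r2 + r1^2*r2*Real.sin r1) + κ*l1*(r1*Real.sinh r2 - r2*Real.sin r1)) * (M*(r2^3*Real.sinh r2 - r1^3*Real.sin r1) + (κ*l1+l2)*(r2*Real.sinh r2 + r1*Real.sin r1)) = 0 := by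
    by_cases hα : α = 0
    · by_cases hβ : β = 0
      · exfalso
        have h := congrArg Prod.fst (hEq ht0)
        simp only at h
        rw [hα, hβ] at h
        simp [mixfn] at h
        exact hyt0 h
      · have hmul : β * ((M*(r2^2*Real.cosh r2 + r1^2*Real.cos r1) + κ*l1*(Real.cosh r2 - Real.cos r1)) * (M*(r1*r2^3*Real.cosh r2 + r1^3*r2*Real.cos r1) + (κ*l1+l2)*(r1*r2*Real.cosh r2 - r1*r2*Real.cos r1)) - (M*(r1*r2^2*Real.sinh r2 + r1^2*r2*Real.sin r1) + κ*l1*(r1*Real.sinh r2 - r2*Real.sin r1)) * (M*(r2^3*Real.sinh r2 - r1^3*Real.sin r1) + (κ*l1+l2)*(r2*Real.sinh r2 + r1*Real.sin r1))) = 0 := by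
          linear_combination (M*(r2^2*Real.cosh r2 + r1^2*Real.cos r1) + κ*l1*(Real.cosh r2 - Real.cos r1)) * eq2 - (M*(r2^3*Real.sinh r2 - r1^3*Real.sin r1) + (κ*l1+l2)*(r2*Real.sinh r2 + r1*Real.sin r1)) * eq1
        rcases mul_eq_zero.mp hmul with h | h
        · exact absurd h hβ
        · exact h
    · have hmul : α * ((M*(r2^2*Real.cosh r2 + r1^2*Real.cos r1) + κ*l1*(Real.cosh r2 - Real.cos r1)) * (M*(r1*r2^3*Real.cosh r2 + r1^3*r2*Real.cos r1) + (κ*l1+l2)*(r1*r2*Real.cosh r2 - r1*r2*Real.cos r1)) - (M*(r1*r2^2*Real.sinh r2 + r1^2*r2*Real.sin r1) + κ*l1*(r1*Real.sinh r2 - r2*Real.sin r1)) * (M*(r2^3*Real.sinh r2 - r1^3*Real.sin r1) + (κ*l1+l2)*(r2*Real.sinh r2 + r1*Real.sin r1))) = 0 := by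
        linear_combination (M*(r1*r2^3*Real.cosh r2 + r1^3*r2*Real.cos r1) + (κ*l1+l2)*(r1*r2*Real.cosh r2 - r1*r2*Real.cos r1)) * eq1 - (M*(r1*r2^2*Real.sinh r2 + r1^2*r2*Real.sin r1) + κ*l1*(r1*Real.sinh r2 - r2*Real.sin r1)) * eq2
      rcases mul_eq_zero.mp hmul with h | h
      · exact absurd h hα
      · exact h
  -- the interaction function equals the determinant
  have key : fInt κ l1 l2 = (M*(r2^2*Real.cosh r2 + r1^2*Real.cos r1) + κ*l1*(Real.cosh r2 - Real.cos r1)) * (M*(r1*r2^3*Real.cosh r2 + r1^3*r2*Real.cos r1) + (κ*l1+l2)*(r1*r2*Real.cosh r2 - r1*r2*Real.cos r1)) - (M*(r1*r2^2*Real.sinh r2 + r1^2*r2*Real.sin r1) + κ*l1*(r1*Real.sinh r2 - r2*Real.sin r1)) * (M*(r2^3*Real.sinh r2 - r1^3*Real.sin r1) + (κ*l1+l2)*(r2*Real.sinh r2 + r1*Real.sin r1)) := by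
    unfold fInt
    rw [← hr1def, ← hr2def, ← hMdef, hsb']
    rw [hl1'', hl2'']
    linear_combination (- r1^2*r2^4*M*(Real.sin r1)*(Real.sinh r2) - 2*r1^3*r2^3*M - 2*r1^3*r2^3*M*(Real.cos r1)*(Real.cosh r2) + r1^4*r2^2*M*(Real.sin r1)*(Real.sinh r2) - 2*r1^4*r2^4*κ*M*(Real.sin r1)*(Real.sinh r2)) * hE + (- r1^3*r2^3*M^2 + r1^3*r2^5*κ*M^2) * h3 + (- r1^3*r2^3*M^2 - r1^5*r2^3*κ*M^2) * h4
  rw [key]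
  exact hdet
end

section
/- Let κ ≥ 0 and λ0 = (λ01, λ02) with 1 − κ λ02 ≠ 0. Let y, q : [0,1] → ℝ be four times continuously differentiable, where y satisfies y(0) = 0, y'(0) = 0, y''(1)(1−κλ02) + κλ01 y(1) = 0, y'''(1)(1−κλ02) + (κλ01+λ02) y'(1) = 0, and q satisfies q(0) = 0, q'(0) = 0, q''(1) = 0, q'''(1) + (λ02/(1−κλ02)) q'(1) = 0. Then ∫₀¹ (L⁴(λ0)y)(t) · q(t) dt = ∫₀¹ y(t) · (L⁴(λ0)q)(t) dt. That is, the fourth-order operator with the given boundary conditions and its formal adjoint with the adjoint boundary conditions satisfy the adjointness identity with respect to the L² inner product on [0,1]. -/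
open Set

private lemma smoothness_pack (f : ℝ → ℝ) (hf : ContDiff ℝ 4 f) :
    Differentiable ℝ f ∧ Differentiable ℝ (deriv f) ∧
    Differentiable ℝ (deriv (deriv f)) ∧ Differentiable ℝ (deriv (deriv (deriv f))) ∧
    Continuous (deriv (deriv (deriv (deriv f)))) := by
  have h4 : ContDiff ℝ ((3:ℕ)+1) f := by exact_mod_cast hf
  have h3 : ContDiff ℝ ((2:ℕ)+1) (deriv f) := by
    exact_mod_cast (contDiff_succ_iff_deriv.mp h4).2.2
  have h2 : ContDiff ℝ ((1:ℕ)+1) (deriv (deriv f)) := by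
    exact_mod_cast (contDiff_succ_iff_deriv.mp h3).2.2
  have h1 : ContDiff ℝ ((0:ℕ)+1) (deriv (deriv (deriv f))) := by
    exact_mod_cast (contDiff_succ_iff_deriv.mp h2).2.2
  have h0 : ContDiff ℝ 0 (deriv (deriv (deriv (deriv f)))) := by
    exact_mod_cast (contDiff_succ_iff_deriv.mp h1).2.2
  exact ⟨(contDiff_succ_iff_deriv.mp h4).1, (contDiff_succ_iff_deriv.mp h3).1,
    (contDiff_succ_iff_deriv.mp h2).1, (contDiff_succ_iff_deriv.mp h1).1,
    h0.continuous⟩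

/-- adjointness identity `⟨L⁴(λ0)y, q⟩ = ⟨y, L⁴(λ0)q⟩` in the `L²([0,1])`
inner product, for `y` satisfying the direct boundary conditions and `q` satisfying the
adjoint boundary conditions. -/
theorem stmt13 (κ l01 l02 : ℝ) (hκ : 0 ≤ κ) (hden : 1 - κ * l02 ≠ 0)
    (y q : ℝ → ℝ) (hy : ContDiff ℝ 4 y) (hq : ContDiff ℝ 4 q)
    (hy0 : y 0 = 0) (hy0' : deriv y 0 = 0)
    (hy1 : deriv (deriv y) 1 * (1 - κ * l02) + κ * l01 * y 1 = 0)
    (hy1' : deriv (deriv (deriv y)) 1 * (1 - κ * l02) + (κ * l01 + l02) * deriv y 1 = 0)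
    (hq0 : q 0 = 0) (hq0' : deriv q 0 = 0)
    (hq1 : deriv (deriv q) 1 = 0)
    (hq1' : deriv (deriv (deriv q)) 1 + l02 / (1 - κ * l02) * deriv q 1 = 0) :
    ∫ t in (0:ℝ)..1, L4 κ l01 l02 y t * q t = ∫ t in (0:ℝ)..1, y t * L4 κ l01 l02 q t := by
  obtain ⟨hy0d, hy1d, hy2d, hy3d, hy4c⟩ := smoothness_pack y hy
  obtain ⟨hq0d, hq1d, hq2d, hq3d, hq4c⟩ := smoothness_pack q hq
  set c : ℝ := (κ * l01 + l02) / (1 - κ * l02) with hc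
  set d : ℝ := l01 / (1 - κ * l02) with hd
  -- the "potential" whose derivative is L4 y * q - y * L4 q
  set H : ℝ → ℝ := fun t =>
    deriv (deriv (deriv y)) t * q t - deriv (deriv y) t * deriv q t
      + deriv y t * deriv (deriv q) t - y t * deriv (deriv (deriv q)) t
      + c * (deriv y t * q t - y t * deriv q t) with hH
  have hder : ∀ t ∈ uIcc (0:ℝ) 1,
      HasDerivAt H (L4 κ l01 l02 y t * q t - y t * L4 κ l01 l02 q t) t := by
    intro t _
    have h1 := ((hy3d t).hasDerivAt.mul (hq0d t).hasDerivAt)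
    have h2 := ((hy2d t).hasDerivAt.mul (hq1d t).hasDerivAt)
    have h3 := ((hy1d t).hasDerivAt.mul (hq2d t).hasDerivAt)
    have h4 := ((hy0d t).hasDerivAt.mul (hq3d t).hasDerivAt)
    have h5 := ((hy1d t).hasDerivAt.mul (hq0d t).hasDerivAt)
    have h6 := ((hy0d t).hasDerivAt.mul (hq1d t).hasDerivAt)
    have := (((h1.sub h2).add h3).sub h4).add (((h5.sub h6)).const_mul c)
    refine this.congr_deriv ?_
    simp only [L4, hc]
    ring
  have hcont : Continuous (fun t => L4 κ l01 l02 y t * q t - y t * L4 κ l01 l02 q t) := by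
    unfold L4
    have := hy2d.continuous; have := hq2d.continuous; have := hy0d.continuous; have := hq0d.continuous
    fun_prop
  have hint : IntervalIntegrable
      (fun t => L4 κ l01 l02 y t * q t - y t * L4 κ l01 l02 q t) MeasureTheory.volume 0 1 :=
    hcont.intervalIntegrable 0 1
  have key : (∫ t in (0:ℝ)..1, (L4 κ l01 l02 y t * q t - y t * L4 κ l01 l02 q t)) = H 1 - H 0 :=
    intervalIntegral.integral_eq_sub_of_hasDerivAt hder hint
  have hB : H 1 - H 0 = 0 := by
    have e1 : deriv (deriv y) 1 = -(κ * l01) * y 1 / (1 - κ * l02) := by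
      field_simp; linarith [hy1]
    have e2 : deriv (deriv (deriv y)) 1 = -(κ * l01 + l02) * deriv y 1 / (1 - κ * l02) := by
      field_simp; linarith [hy1']
    have e3 : deriv (deriv (deriv q)) 1 = -(l02 / (1 - κ * l02)) * deriv q 1 := by
      linarith [hq1']
    simp only [hH, hy0, hy0', hq0, hq0', hq1, e1, e2, e3, hc]
    field_simp
    ring
  have hcont1 : Continuous (fun t => L4 κ l01 l02 y t * q t) := by
    unfold L4; have := hy2d.continuous; have := hq2d.continuous; have := hy0d.continuous; have := hq0d.continuous; fun_prop
  have hcont2 : Continuous (fun t => y t * L4 κ l01 l02 q t) := by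
    unfold L4; have := hy2d.continuous; have := hq2d.continuous; have := hy0d.continuous; have := hq0d.continuous; fun_prop
  have hsub := intervalIntegral.integral_sub
    (hcont1.intervalIntegrable 0 1 : IntervalIntegrable _ MeasureTheory.volume 0 1)
    (hcont2.intervalIntegrable 0 1 : IntervalIntegrable _ MeasureTheory.volume 0 1)
  rw [hsub] at key
  linarith [key, hB]
end

section
/- Let κ ≥ 0, λ1, λ2, α1, α2 ∈ ℝ, let ρ0 : [0,1] → ℝ be continuous and nonvanishing, and let v, m, y : [0,1] → ℝ be twice continuously differentiable with |y'(t)| < 1 on [0,1], satisfying on [0,1]: v' = −λ1 y, m' = −v √(1−(y')²) − λ2 y', m − κ m'' = y''/√(1−(y')²) − α1/ρ0, together with v(1) = α2 and m(1) = 0. Assume 1 + κ α2 y'(t) + κ λ1 y'(t) I₁y(t) − κ λ2 √(1−y'(t)²) ≠ 0 for all t. Then y satisfies G(λ, α)y(t) = 0 for all t ∈ [0,1], where G(λ,α)y(t) := y''(t) − √(1−y'(t)²) · [α1/ρ0(t) + α2 J₁y(t) + λ1 (J₂y(t) − κ y(t)√(1−y'(t)²)) + λ2 I₁y'(t)] /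 [1 + κ α2 y'(t) + κ λ1 y'(t) I₁y(t) − κ λ2 √(1−y'(t)²)]. -/
open Set

/-- `J₁ y (t) = ∫_t^1 √(1 − y'(τ)²) dτ`. -/
noncomputable def J1 (y : ℝ → ℝ) (t : ℝ) : ℝ :=
  ∫ τ in t..(1:ℝ), Real.sqrt (1 - (deriv y τ) ^ 2)

/-- The non-linear integro-differential operator `G(λ, α)` of the imperfect rod. -/
noncomputable def G (κ l1 l2 a1 a2 : ℝ) (ρ0 : ℝ → ℝ) (y : ℝ → ℝ) (t : ℝ) : ℝ :=
  deriv (deriv y) t - Real.sqrt (1 - (deriv y t) ^ 2) *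
    ((a1 / ρ0 t + a2 * J1 y t
        + l1 * (J2 y t - κ * y t * Real.sqrt (1 - (deriv y t) ^ 2))
        + l2 * I1 (deriv y) t) /
     (1 + κ * a2 * deriv y t + κ * l1 * deriv y t * I1 y t
        - κ * l2 * Real.sqrt (1 - (deriv y t) ^ 2)))

/-- the equilibrium system of the imperfect rotating axially compressed
non-local rod reduces to the single integro-differential equation `G(λ, α)y = 0`. -/
theorem stmt18 (κ l1 l2 a1 a2 : ℝ) (hκ : 0 ≤ κ)
    (ρ0 : ℝ → ℝ) (hρc : Continuous ρ0) (hρ0 : ∀ t ∈ Icc (0:ℝ) 1, ρ0 t ≠ 0)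
    (v m y : ℝ → ℝ)
    (hv : ContDiff ℝ 2 v) (hm : ContDiff ℝ 2 m) (hy : ContDiff ℝ 2 y)
    (hy' : ∀ t ∈ Icc (0:ℝ) 1, |deriv y t| < 1)
    (e1 : ∀ t ∈ Icc (0:ℝ) 1, deriv v t = -l1 * y t)
    (e2 : ∀ t ∈ Icc (0:ℝ) 1,
      deriv m t = -v t * Real.sqrt (1 - (deriv y t) ^ 2) - l2 * deriv y t)
    (e3 : ∀ t ∈ Icc (0:ℝ) 1,
      m t - κ * deriv (deriv m) t
        = deriv (deriv y) t / Real.sqrt (1 - (deriv y t) ^ 2) - a1 / ρ0 t)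
    (hv1 : v 1 = a2) (hm1 : m 1 = 0)
    (hden : ∀ t ∈ Icc (0:ℝ) 1,
      1 + κ * a2 * deriv y t + κ * l1 * deriv y t * I1 y t
        - κ * l2 * Real.sqrt (1 - (deriv y t) ^ 2) ≠ 0) :
    ∀ t ∈ Icc (0:ℝ) 1, G κ l1 l2 a1 a2 ρ0 y t = 0 := by
  have h21 : ((2:WithTop ℕ∞)) = (1+1 : WithTop ℕ∞) := by norm_num
  have hy1 : ContDiff ℝ 1 (deriv y) := by rw [h21] at hy; exact (contDiff_succ_iff_deriv.mp hy).2.2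
  have hm1' : ContDiff ℝ 1 (deriv m) := by rw [h21] at hm; exact (contDiff_succ_iff_deriv.mp hm).2.2
  have hv1' : ContDiff ℝ 1 (deriv v) := by rw [h21] at hv; exact (contDiff_succ_iff_deriv.mp hv).2.2
  have hyd : Differentiable ℝ y := hy.differentiable (by norm_num)
  have hvd : Differentiable ℝ v := hv.differentiable (by norm_num)
  have hmd : Differentiable ℝ m := hm.differentiable (by norm_num)
  have hy'd : Differentiable ℝ (deriv y) := hy1.differentiable (by norm_num)
  have hm'd : Differentiable ℝ (deriv m) := hm1'.differentiable (by norm_num)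
  have hyc : Continuous y := hyd.continuous
  have hy'c : Continuous (deriv y) := hy'd.continuous
  have hvc : Continuous v := hvd.continuous
  have hv'c : Continuous (deriv v) := (hv1'.differentiable (by norm_num)).continuous
  have hm'c : Continuous (deriv m) := hm'd.continuous
  set s : ℝ → ℝ := fun τ => Real.sqrt (1 - (deriv y τ)^2) with hs_def
  have hsc : Continuous s := (continuous_const.sub (hy'c.pow 2)).sqrt
  -- I1 y is differentiable with derivative -y
  have hI1y : ∀ a : ℝ, HasDerivAt (I1 y) (-(y a)) a := fun a =>
    intervalIntegral.integral_hasDerivAt_left (hyc.intervalIntegrable a 1)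
      (hyc.stronglyMeasurableAtFilter _ _) hyc.continuousAt
  have hI1yd : Differentiable ℝ (I1 y) := fun a => (hI1y a).differentiableAt
  have hI1yc : Continuous (I1 y) := hI1yd.continuous
  -- v formula
  have hvf : ∀ t ∈ Icc (0:ℝ) 1, v t = a2 + l1 * I1 y t := by
    intro t ht
    have hsub : uIcc t (1:ℝ) ⊆ Icc (0:ℝ) 1 := by
      rw [uIcc_of_le ht.2]; exact Icc_subset_Icc ht.1 le_rfl
    have h1 : ∫ τ in t..(1:ℝ), deriv v τ = v 1 - v t :=
      intervalIntegral.integral_deriv_eq_sub (fun x _ => hvd x) (hv'c.intervalIntegrable _ _)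
    have h2 : ∫ τ in t..(1:ℝ), deriv v τ = ∫ τ in t..(1:ℝ), -l1 * y τ :=
      intervalIntegral.integral_congr (fun x hx => e1 x (hsub hx))
    rw [intervalIntegral.integral_const_mul] at h2
    have h3 : v 1 - v t = -l1 * I1 y t := by rw [← h1, h2]; rfl
    rw [hv1] at h3; linarith
  -- m formula
  have hmf : ∀ t ∈ Icc (0:ℝ) 1, m t = a2 * J1 y t + l1 * J2 y t + l2 * I1 (deriv y) t := by
    intro t ht
    have hsub : uIcc t (1:ℝ) ⊆ Icc (0:ℝ) 1 := by
      rw [uIcc_of_le ht.2]; exact Icc_subset_Icc ht.1 le_rfl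
    have h1 : ∫ τ in t..(1:ℝ), deriv m τ = m 1 - m t :=
      intervalIntegral.integral_deriv_eq_sub (fun x _ => hmd x) (hm'c.intervalIntegrable _ _)
    have h2 : ∫ τ in t..(1:ℝ), deriv m τ
        = ∫ τ in t..(1:ℝ), (-(a2 * s τ) + (-(l1 * (I1 y τ * s τ)) + -(l2 * deriv y τ))) := by
      refine intervalIntegral.integral_congr (fun x hx => ?_)
      rw [e2 x (hsub hx), hvf x (hsub hx)]; simp only [hs_def]; ring
    have i1 : IntervalIntegrable (fun τ => -(a2 * s τ)) MeasureTheory.volume t 1 :=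
      ((continuous_const.mul hsc).neg).intervalIntegrable _ _
    have i2 : IntervalIntegrable (fun τ => -(l1 * (I1 y τ * s τ))) MeasureTheory.volume t 1 :=
      ((continuous_const.mul (hI1yc.mul hsc)).neg).intervalIntegrable _ _
    have i3 : IntervalIntegrable (fun τ => -(l2 * deriv y τ)) MeasureTheory.volume t 1 :=
      ((continuous_const.mul hy'c).neg).intervalIntegrable _ _
    rw [intervalIntegral.integral_add i1 (i2.add i3), intervalIntegral.integral_add i2 i3] at h2
    have hJ2 : J2 y t = ∫ τ in t..(1:ℝ), I1 y τ * s τ := by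
      unfold J2
      refine intervalIntegral.integral_congr (fun τ _ => ?_)
      simp only [intervalIntegral.integral_mul_const]; rfl
    have e4 : (∫ τ in t..(1:ℝ), -(a2 * s τ)) = -(a2 * J1 y t) := by
      rw [intervalIntegral.integral_neg, intervalIntegral.integral_const_mul]; rfl
    have e5 : (∫ τ in t..(1:ℝ), -(l1 * (I1 y τ * s τ))) = -(l1 * J2 y t) := by
      rw [intervalIntegral.integral_neg, intervalIntegral.integral_const_mul, hJ2]
    have e6 : (∫ τ in t..(1:ℝ), -(l2 * deriv y τ)) = -(l2 * I1 (deriv y) t) := by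
      rw [intervalIntegral.integral_neg, intervalIntegral.integral_const_mul]; rfl
    rw [e4, e5, e6, h1, hm1] at h2
    linarith
  -- main computation
  intro t ht
  have hd := hy' t ht
  have hd' := abs_lt.mp hd
  have hpos : (0:ℝ) < 1 - (deriv y t)^2 := by nlinarith
  have hSpos : 0 < s t := Real.sqrt_pos.mpr hpos
  have hSne : s t ≠ 0 := ne_of_gt hSpos
  have hinnerne : (1:ℝ) - (deriv y t)^2 ≠ 0 := ne_of_gt hpos
  -- derivative of s at t
  have hinner : HasDerivAt (fun τ => 1 - (deriv y τ)^2)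
      (0 - 2 * (deriv y t)^1 * deriv (deriv y) t) t :=
    (hasDerivAt_const t (1:ℝ)).sub (((hy'd t).hasDerivAt).pow 2)
  have hs' : HasDerivAt s ((0 - 2 * (deriv y t)^1 * deriv (deriv y) t) / (2 * s t)) t :=
    hinner.sqrt hinnerne
  -- derivative of h := fun τ => -v τ * s τ - l2 * deriv y τ
  have hh : HasDerivAt (fun τ => -v τ * s τ - l2 * deriv y τ)
      (-(deriv v t) * s t + (-v t) * ((0 - 2 * (deriv y t)^1 * deriv (deriv y) t) / (2 * s t))
        - l2 * deriv (deriv y) t) t :=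
    (((hvd t).hasDerivAt.neg.mul hs')).sub (((hy'd t).hasDerivAt).const_mul l2)
  have hm'' : deriv (deriv m) t
      = -(deriv v t) * s t + (-v t) * ((0 - 2 * (deriv y t)^1 * deriv (deriv y) t) / (2 * s t))
        - l2 * deriv (deriv y) t := by
    have hu : UniqueDiffWithinAt ℝ (Icc (0:ℝ) 1) t := (uniqueDiffOn_Icc zero_lt_one) t ht
    rw [← (hm'd t).derivWithin hu, ← hh.deriv, ← hh.differentiableAt.derivWithin hu]
    exact derivWithin_congr (fun x hx => e2 x hx) (e2 t ht)
  have key := e3 t ht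
  rw [hm'', hmf t ht, e1 t ht, hvf t ht] at key
  have hρ := hρ0 t ht
  have hD := hden t ht
  unfold G
  rw [sub_eq_zero]
  rw [eq_comm, mul_comm]
  rw [div_mul_eq_mul_div, div_eq_iff hD]
  have hsval : Real.sqrt (1 - deriv y t ^ 2) = s t := rfl
  rw [hsval] at key hD ⊢
  field_simp at key
  have h2s : (2 * s t : ℝ) ≠ 0 := by positivity
  have hX : ((a1 / ρ0 t + a2 * J1 y t + l1 * (J2 y t - κ * y t * s t) + l2 * I1 (deriv y) t) * s t
      - deriv (deriv y) t * (1 + κ * a2 * deriv y t + κ * l1 * deriv y t * I1 y t - κ * l2 * s t))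
      * (2 * s t) = 0 := by
    field_simp
    linear_combination s t * key
  rcases mul_eq_zero.mp hX with h | h
  · linarith
  · exact absurd h h2s
end
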